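/- arXiv:2504.00553 — 4 statements merged into one kernel-verified Lean document; each statement's English description precedes it below -/
import Mathlib

section
/- For a finite simple graph G on n vertices, the star b-chromatic number satisfies S_b(G) = n if and only if G is isomorphic to the complete graph K_n. -/
/-!
Definitions for star colorings, star recoloring steps, the strict partial order `≺ₛ`,
star b-vertices, the star (b-)chromatic number, star degrees and related notions,
following Božović, Mesarič Štesl, Peterin,
"On star b-chromatic number of a graph".
-/

variable {V : Type*}

/-- A proper coloring which is a *star coloring*: no path on four vertices
(vertices `a-b-x-y` with the three edges `ab`, `bx`, `xy`) is bicolored,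
i.e. the union of any two color classes induces a star forest. -/
def IsStarColoring (G : SimpleGraph V) (c : V → ℕ) : Prop :=
  (∀ ⦃u w⦄, G.Adj u w → c u ≠ c w) ∧
  ∀ a b x y : V, G.Adj a b → G.Adj b x → G.Adj x y →
    a ≠ x → b ≠ y → a ≠ y → ¬(c a = c x ∧ c b = c y)

/-- The set of colors used by a coloring. -/
def colorsUsed [Fintype V] (c : V → ℕ) : Finset ℕ :=
  Finset.image c Finset.univ

/-- `c'` is obtained from `c` by a *star recoloring step*: some color class `Vᵢ`
of the star coloring `c` is completely recolored, each of its vertices receiving one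
of the remaining colors of `c`, so that the result `c'` is again a star coloring
(using the colors of `c` minus `i`). We write `c' ⊲ₛ c`. -/
def StarRecolorStep [Fintype V] (G : SimpleGraph V) (c' c : V → ℕ) : Prop :=
  IsStarColoring G c ∧ IsStarColoring G c' ∧
  ∃ i ∈ colorsUsed c,
    (∀ v, c v ≠ i → c' v = c v) ∧
    ∀ v, c v = i → c' v ≠ i ∧ c' v ∈ colorsUsed c

/-- A minimal element of the strict partial order `≺ₛ` (the transitive closure of
the star recoloring step relation `⊲ₛ`): a star coloring on which no star
recoloring step can be performed. -/
def IsStarBColoring [Fintype V] (G : SimpleGraph V) (c : V → ℕ) : Prop :=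
  IsStarColoring G c ∧ ∀ c', ¬ StarRecolorStep G c' c

/-- The *star b-chromatic number* `Sᵦ(G)`: the maximum number of colors used by a
minimal element of `≺ₛ`. -/
noncomputable def starBChromaticNumber [Fintype V] (G : SimpleGraph V) : ℕ :=
  sSup {n | ∃ c : V → ℕ, IsStarBColoring G c ∧ (colorsUsed c).card = n}

/-- The *star chromatic number* `S(G)`: the minimum number of colors in a star coloring. -/
noncomputable def starChromaticNumber [Fintype V] (G : SimpleGraph V) : ℕ :=
  sInf {n | ∃ c : V → ℕ, IsStarColoring G c ∧ (colorsUsed c).card = n}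

/-- A color `j` is *blocked* for the vertex `v` under the star coloring `c`
if `j` is the color of `v` itself, or recoloring `v` alone with `j` destroys
the star coloring property. -/
def ColorBlockedFor [DecidableEq V] (G : SimpleGraph V) (c : V → ℕ) (v : V) (j : ℕ) : Prop :=
  j = c v ∨ ¬ IsStarColoring G (Function.update c v j)

/-- A color of `c` which is not blocked for `v` is *available* for `v`. -/
def ColorAvailableFor [Fintype V] [DecidableEq V] (G : SimpleGraph V) (c : V → ℕ)
    (v : V) (j : ℕ) : Prop :=
  j ∈ colorsUsed c ∧ ¬ ColorBlockedFor G c v j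

/-- `u-b-x-w` is an induced path on four vertices of `G`. -/
def IsInducedP4 (G : SimpleGraph V) (u b x w : V) : Prop :=
  G.Adj u b ∧ G.Adj b x ∧ G.Adj x w ∧
  ¬ G.Adj u x ∧ ¬ G.Adj b w ∧ ¬ G.Adj u w ∧
  u ≠ x ∧ b ≠ w ∧ u ≠ w

/-- The relation `~ᵢ` on a color class: two vertices of the same color joined
by an induced path on four vertices. -/
def P4Rel (G : SimpleGraph V) (c : V → ℕ) (u w : V) : Prop :=
  c u = c w ∧ ∃ b x, IsInducedP4 G u b x w

/-- The `P₄`-system of `v`: its equivalence class under the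
reflexive-transitive closure of `~ᵢ`. -/
def P4System (G : SimpleGraph V) (c : V → ℕ) (v : V) : Set V :=
  {u | Relation.ReflTransGen (P4Rel G c) v u}

/-- An available color `j` for `v` is *blocked for the `P₄`-system of `v`* if every
recoloring of the color class of `v` (each vertex receiving an available color)
in which `v` is recolored by `j` yields a bicolored path on four vertices between
two vertices of the `P₄`-system of `v`. -/
def BlockedForP4System [Fintype V] [DecidableEq V] (G : SimpleGraph V) (c : V → ℕ)
    (v : V) (j : ℕ) : Prop :=
  ∀ c' : V → ℕ,
    (∀ u, c u ≠ c v → c' u = c u) →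
    (∀ u, c u = c v → ColorAvailableFor G c u (c' u)) →
    c' v = j →
    ∃ u w b x, u ∈ P4System G c v ∧ w ∈ P4System G c v ∧
      G.Adj u b ∧ G.Adj b x ∧ G.Adj x w ∧ u ≠ x ∧ b ≠ w ∧ u ≠ w ∧
      c' u = c' x ∧ c' b = c' w

/-- A *star b-vertex*: every available color for `v` is blocked for its `P₄`-system. -/
def IsStarBVertex [Fintype V] [DecidableEq V] (G : SimpleGraph V) (c : V → ℕ) (v : V) : Prop :=
  ∀ j, ColorAvailableFor G c v j → BlockedForP4System G c v j

/-- The *star degree* `dˢ_G(v)` of a vertex: the maximum number of colors blocked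
for `v` over all star colorings of `G`. -/
noncomputable def starDegree [Fintype V] [DecidableEq V] (G : SimpleGraph V) (v : V) : ℕ :=
  sSup {n | ∃ c : V → ℕ, IsStarColoring G c ∧
    {j | j ∈ colorsUsed c ∧ ColorBlockedFor G c v j}.ncard = n}

/-- The `mₛ`-degree of a graph: the largest `k` such that `G` has `k` vertices
of star degree at least `k - 1` (equivalently, with the vertices ordered by
non-increasing star degree, `mₛ(G) = max {i : i - 1 ≤ dˢ_G(vᵢ)}`). -/
noncomputable def msDegree [Fintype V] [DecidableEq V] (G : SimpleGraph V) : ℕ :=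
  sSup {k | ∃ s : Finset V, s.card = k ∧ ∀ v ∈ s, k - 1 ≤ starDegree G v}

/-- The maximum degree `Δ(G)` of a graph. -/
noncomputable def maxDeg (G : SimpleGraph V) : ℕ :=
  sSup {d | ∃ v : V, (G.neighborSet v).ncard = d}

/-- The *b-chromatic number* `φ(G)`: the maximum number of colors of a proper coloring
in which every color class contains a vertex whose closed neighborhood contains
all the colors. -/
noncomputable def bChromaticNumber [Fintype V] (G : SimpleGraph V) : ℕ :=
  sSup {k | ∃ c : V → ℕ, (∀ ⦃u w⦄, G.Adj u w → c u ≠ c w) ∧ (colorsUsed c).card = k ∧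
    ∀ i ∈ colorsUsed c, ∃ v, c v = i ∧
      ∀ j ∈ colorsUsed c, ∃ u, (u = v ∨ G.Adj v u) ∧ c u = j}

/-- The join `G ∨ H` of two simple graphs: disjoint union of `G` and `H`
together with all edges between the two vertex sets. -/
def graphJoin {α β : Type*} (G : SimpleGraph α) (H : SimpleGraph β) :
    SimpleGraph (α ⊕ β) where
  Adj x y :=
    (∃ a b, x = Sum.inl a ∧ y = Sum.inl b ∧ G.Adj a b) ∨
    (∃ a b, x = Sum.inr a ∧ y = Sum.inr b ∧ H.Adj a b) ∨
    (∃ a b, x = Sum.inl a ∧ y = Sum.inr b) ∨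
    (∃ a b, x = Sum.inr a ∧ y = Sum.inl b)
  symm := by
    constructor
    rintro x y (⟨a,b,rfl,rfl,h⟩|⟨a,b,rfl,rfl,h⟩|⟨a,b,rfl,rfl⟩|⟨a,b,rfl,rfl⟩)
    · exact Or.inl ⟨b, a, rfl, rfl, h.symm⟩
    · exact Or.inr (Or.inl ⟨b, a, rfl, rfl, h.symm⟩)
    · exact Or.inr (Or.inr (Or.inr ⟨b, a, rfl, rfl⟩))
    · exact Or.inr (Or.inr (Or.inl ⟨b, a, rfl, rfl⟩))
  loopless := by
    constructor
    rintro x (⟨a,b,h1,h2,h⟩|⟨a,b,h1,h2,h⟩|⟨a,b,h1,h2⟩|⟨a,b,h1,h2⟩) <;> subst h1 <;>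
      simp_all [SimpleGraph.irrefl]

/-- `N₂(v)`: vertices at distance exactly two from `v`. -/
def distTwoSet (G : SimpleGraph V) (v : V) : Set V := {u | G.dist v u = 2}

/-- `N₃(v)`: vertices at distance exactly three from `v`. -/
def distThreeSet (G : SimpleGraph V) (v : V) : Set V := {u | G.dist v u = 3}

/-- `X(v)`: vertices at distance two from `v` with no neighbor at distance three from `v`. -/
def XSet (G : SimpleGraph V) (v : V) : Set V :=
  {u | u ∈ distTwoSet G v ∧ ∀ w ∈ distThreeSet G v, ¬ G.Adj u w}

/-- `Y(v)`: vertices at distance two from `v` having a neighbor at distance three from `v`. -/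
def YSet (G : SimpleGraph V) (v : V) : Set V := distTwoSet G v \ XSet G v

lemma card_colorsUsed_le [Fintype V] (c : V → ℕ) :
    (colorsUsed c).card ≤ Fintype.card V :=
  le_trans Finset.card_image_le (le_of_eq Finset.card_univ)

lemma injective_of_card_colorsUsed [Fintype V] {c : V → ℕ}
    (h : (colorsUsed c).card = Fintype.card V) : Function.Injective c := by
  have hinj : Set.InjOn c (Finset.univ : Finset V) := by
    apply Finset.injOn_of_card_image_eq
    simpa [Finset.card_univ, colorsUsed] using h
  intro a b hab
  exact hinj (Finset.mem_univ a) (Finset.mem_univ b) hab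

lemma isStarColoring_of_injective (G : SimpleGraph V) {c : V → ℕ}
    (hc : Function.Injective c) : IsStarColoring G c := by
  refine ⟨fun u w hadj he => hadj.ne (hc he), ?_⟩
  rintro a b x y _ _ _ hax _ _ ⟨h1, _⟩
  exact hax (hc h1)

lemma mem_colorsUsed [Fintype V] (c : V → ℕ) (v : V) : c v ∈ colorsUsed c :=
  Finset.mem_image.2 ⟨v, Finset.mem_univ v, rfl⟩

/-- **Proposition.** For a finite simple graph `G` on `n` vertices, `Sᵦ(G) = n` if and
only if `G` is (isomorphic to) the complete graph `Kₙ`. -/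
theorem starBChromaticNumber_eq_card_iff [Fintype V] (G : SimpleGraph V) :
    starBChromaticNumber G = Fintype.card V ↔ G = ⊤ := by
  classical
  set S : Set ℕ := {n | ∃ c : V → ℕ, IsStarBColoring G c ∧ (colorsUsed c).card = n} with hS
  have hbdd : BddAbove S := by
    refine ⟨Fintype.card V, ?_⟩
    rintro n ⟨c, _, rfl⟩
    exact card_colorsUsed_le c
  constructor
  · intro h
    by_contra hG
    have hne : ∃ u v : V, u ≠ v ∧ ¬ G.Adj u v := by
      by_contra hc
      push_neg at hc
      apply hG
      ext a b
      simp only [SimpleGraph.top_adj]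
      exact ⟨fun h => h.ne, fun hab => hc a b hab⟩
    obtain ⟨u, v, huv, hadj⟩ := hne
    have hn2 : 1 < Fintype.card V := Fintype.one_lt_card_iff.2 ⟨u, v, huv⟩
    -- S is nonempty since its sSup is positive
    have hSne : S.Nonempty := by
      by_contra hemp
      rw [Set.not_nonempty_iff_eq_empty] at hemp
      rw [starBChromaticNumber, ← hS, hemp, csSup_empty, Nat.bot_eq_zero] at h
      omega
    have hmem : Fintype.card V ∈ S := by
      have := Nat.sSup_mem hSne hbdd
      rwa [show sSup S = Fintype.card V from h] at this
    obtain ⟨c, ⟨hstar, hnostep⟩, hcard⟩ := hmem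
    have hinj : Function.Injective c := injective_of_card_colorsUsed hcard
    set c' : V → ℕ := Function.update c u (c v) with hc'
    have hc'u : c' u = c v := Function.update_self u (c v) c
    have hc'ne : ∀ w, w ≠ u → c' w = c w := fun w hw => Function.update_of_ne hw _ c
    -- key collision fact
    have hcoll : ∀ a x : V, a ≠ x → c' a = c' x → (a = u ∧ x = v) ∨ (a = v ∧ x = u) := by
      intro a x hax he
      by_cases ha : a = u
      · have hx : x ≠ u := fun h => hax (ha.trans h.symm)
        rw [ha, hc'u, hc'ne x hx] at he
        exact Or.inl ⟨ha, hinj he.symm⟩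
      · by_cases hx : x = u
        · rw [hx, hc'u, hc'ne a ha] at he
          exact Or.inr ⟨hinj he, hx⟩
        · rw [hc'ne a ha, hc'ne x hx] at he
          exact absurd (hinj he) hax
    have hc'star : IsStarColoring G c' := by
      constructor
      · intro p q hpq he
        rcases hcoll p q hpq.ne he with ⟨rfl, rfl⟩ | ⟨rfl, rfl⟩
        · exact hadj hpq
        · exact hadj hpq.symm
      · rintro a b x y hab hbx hxy hax hby hay ⟨h1, h2⟩
        rcases hcoll a x hax h1 with ⟨rfl, rfl⟩ | ⟨rfl, rfl⟩ <;>
          rcases hcoll b y hby h2 with ⟨rfl, rfl⟩ | ⟨rfl, rfl⟩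
        · exact hab.ne rfl
        · exact hadj hab
        · exact hadj hab.symm
        · exact hab.ne rfl
    apply hnostep c'
    refine ⟨hstar, hc'star, c u, mem_colorsUsed c u, ?_, ?_⟩
    · intro w hw
      exact hc'ne w (fun h => hw (h ▸ rfl))
    · intro w hw
      have hwu : w = u := hinj hw
      subst hwu
      rw [hc'u]
      exact ⟨fun h => huv (hinj h.symm), mem_colorsUsed c v⟩
  · intro hG
    subst hG
    -- the injective coloring
    set c₀ : V → ℕ := fun v => ((Fintype.equivFin V) v : ℕ) with hc₀
    have hinj : Function.Injective c₀ := fun a b h =>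
      (Fintype.equivFin V).injective (Fin.val_injective h)
    have hmem : Fintype.card V ∈ S := by
      refine ⟨c₀, ⟨isStarColoring_of_injective _ hinj, ?_⟩, ?_⟩
      · rintro c' ⟨_, hc'star, i, hi, hkeep, hchg⟩
        obtain ⟨w, _, hw⟩ := Finset.mem_image.1 hi
        obtain ⟨hne_i, hmemi⟩ := hchg w hw
        obtain ⟨z, _, hz⟩ := Finset.mem_image.1 hmemi
        have hzw : z ≠ w := fun h => hne_i (by rw [← hz, h, hw])
        have hz' : c' z = c₀ z := hkeep z (by rw [hz]; exact hne_i)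
        have heq : c' w = c' z := by rw [hz', hz]
        exact hc'star.1 ((SimpleGraph.top_adj w z).2 (fun h => hzw h.symm)) heq
      · rw [colorsUsed, Finset.card_image_of_injective _ hinj, Finset.card_univ]
    refine le_antisymm ?_ (le_csSup hbdd hmem)
    apply csSup_le ⟨_, hmem⟩
    rintro n ⟨c, _, rfl⟩
    exact card_colorsUsed_le c
end

section
/- Let G be a finite simple graph and c a star k-coloring of G. Then c is a minimal element of the strict partial order ≺_s (i.e., no star recoloring step can be performed on c) if and only if every color class V_i, i ∈ [k], contains a star b-vertex. -/
/-!
Definitions for star colorings, star recoloring steps, the strict partial order `≺ₛ`,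
star b-vertices, the star (b-)chromatic number, star degrees and related notions,
following Božović, Mesarič Štesl, Peterin,
"On star b-chromatic number of a graph".
-/

variable {V : Type*}

section StarHelpers

variable {V : Type*}

lemma myAvail_star [Fintype V] [DecidableEq V] {G : SimpleGraph V} {c : V → ℕ} {v : V} {j : ℕ}
    (h : ColorAvailableFor G c v j) :
    j ≠ c v ∧ IsStarColoring G (Function.update c v j) := by
  obtain ⟨-, h2⟩ := h
  rw [ColorBlockedFor, not_or, not_not] at h2
  exact h2

lemma myAvail_proper [Fintype V] [DecidableEq V] {G : SimpleGraph V} {c : V → ℕ} {v : V} {j : ℕ}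
    (h : ColorAvailableFor G c v j) {w : V} (hw : G.Adj v w) : j ≠ c w := by
  have hs := (myAvail_star h).2.1 hw
  rwa [Function.update_self, Function.update_of_ne hw.ne'] at hs

lemma myP4Rel_symm (G : SimpleGraph V) (c : V → ℕ) : Symmetric (P4Rel G c) := by
  rintro u w ⟨hcw, b, x, h1, h2, h3, n1, n2, n3, d1, d2, d3⟩
  exact ⟨hcw.symm, x, b, h3.symm, h2.symm, h1.symm,
    fun h => n2 h.symm, fun h => n1 h.symm, fun h => n3 h.symm,
    d2.symm, d1.symm, d3.symm⟩

def myP4Setoid (G : SimpleGraph V) (c : V → ℕ) : Setoid V :=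
  ⟨Relation.ReflTransGen (P4Rel G c),
   ⟨fun _ => Relation.ReflTransGen.refl,
    fun h => by
      haveI : Std.Symm (P4Rel G c) := ⟨fun _ _ h => myP4Rel_symm G c h⟩
      exact Std.Symm.symm _ _ h,
    fun h h' => h.trans h'⟩⟩

noncomputable def myRep (G : SimpleGraph V) (c : V → ℕ) : V → V :=
  fun v => Quotient.out (Quotient.mk (myP4Setoid G c) v)

lemma myRep_rel (G : SimpleGraph V) (c : V → ℕ) (v : V) :
    Relation.ReflTransGen (P4Rel G c) (myRep G c v) v :=
  Quotient.exact (Quotient.out_eq (Quotient.mk (myP4Setoid G c) v))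

lemma myRep_eq (G : SimpleGraph V) (c : V → ℕ) {u w : V} (h : P4Rel G c u w) :
    myRep G c u = myRep G c w :=
  congrArg Quotient.out (Quotient.sound (Relation.ReflTransGen.single h))

lemma myRTG_color {G : SimpleGraph V} {c : V → ℕ} {u w : V}
    (h : Relation.ReflTransGen (P4Rel G c) u w) : c u = c w := by
  induction h with
  | refl => rfl
  | tail _ h2 ih => exact ih.trans h2.1

lemma mySingleUpdate [Fintype V] [DecidableEq V] {G : SimpleGraph V} {c c' : V → ℕ} {i : ℕ}
    (hc : IsStarColoring G c) (hc' : IsStarColoring G c')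
    (h1 : ∀ v, c v ≠ i → c' v = c v) (h2 : ∀ v, c v = i → c' v ≠ i)
    {u : V} (hu : c u = i) : IsStarColoring G (Function.update c u (c' u)) := by
  constructor
  · intro p q hpq
    rcases eq_or_ne p u with rfl | hp
    · rw [Function.update_self, Function.update_of_ne hpq.ne']
      have hqi : c q ≠ i := by rw [← hu]; exact (hc.1 hpq).symm
      rw [← h1 q hqi]; exact hc'.1 hpq
    · rcases eq_or_ne q u with rfl | hq
      · rw [Function.update_self, Function.update_of_ne hp]
        have hpi : c p ≠ i := by rw [← hu]; exact hc.1 hpq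
        rw [← h1 p hpi]; exact hc'.1 hpq
      · rw [Function.update_of_ne hp, Function.update_of_ne hq]; exact hc.1 hpq
  · intro a b x y hab hbx hxy hax hby hay hcon
    obtain ⟨e1, e2⟩ := hcon
    by_cases hua : a = u
    · subst hua
      rw [Function.update_self, Function.update_of_ne hax.symm] at e1
      rw [Function.update_of_ne hab.ne', Function.update_of_ne (Ne.symm hay)] at e2
      -- e1 : c' a = c x, e2 : c b = c y
      have hxi : c x ≠ i := fun h => h2 a hu (e1.trans h)
      have hbi : c b ≠ i := by rw [← hu]; exact (hc.1 hab).symm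
      have hyi : c y ≠ i := by rw [← e2]; exact hbi
      exact hc'.2 a b x y hab hbx hxy hax hby hay
        ⟨by rw [h1 x hxi]; exact e1, by rw [h1 b hbi, h1 y hyi]; exact e2⟩
    · by_cases hub : b = u
      · subst hub
        rw [Function.update_of_ne hua, Function.update_of_ne hbx.ne'] at e1
        rw [Function.update_self, Function.update_of_ne (Ne.symm hby)] at e2
        -- e1 : c a = c x, e2 : c' b = c y
        have hyi : c y ≠ i := fun h => h2 b hu (e2.trans h)
        have hai : c a ≠ i := by rw [← hu]; exact hc.1 hab
        have hxi : c x ≠ i := by rw [← hu]; exact (hc.1 hbx).symm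
        exact hc'.2 a b x y hab hbx hxy hax hby hay
          ⟨by rw [h1 a hai, h1 x hxi]; exact e1, by rw [h1 y hyi]; exact e2⟩
      · by_cases hux : x = u
        · subst hux
          rw [Function.update_of_ne hua, Function.update_self] at e1
          rw [Function.update_of_ne hub, Function.update_of_ne hxy.ne'] at e2
          -- e1 : c a = c' x, e2 : c b = c y
          have hai : c a ≠ i := fun h => h2 x hu (e1.symm.trans h)
          have hbi : c b ≠ i := by rw [← hu]; exact hc.1 hbx
          have hyi : c y ≠ i := by rw [← hu]; exact (hc.1 hxy).symm
          exact hc'.2 a b x y hab hbx hxy hax hby hay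
            ⟨by rw [h1 a hai]; exact e1, by rw [h1 b hbi, h1 y hyi]; exact e2⟩
        · by_cases huy : y = u
          · subst huy
            rw [Function.update_of_ne hua, Function.update_of_ne hux] at e1
            rw [Function.update_of_ne hub, Function.update_self] at e2
            -- e1 : c a = c x, e2 : c b = c' y
            have hbi : c b ≠ i := fun h => h2 y hu (e2.symm.trans h)
            have hxi : c x ≠ i := by rw [← hu]; exact hc.1 hxy
            have hai : c a ≠ i := by rw [e1]; exact hxi
            exact hc'.2 a b x y hab hbx hxy hax hby hay
              ⟨by rw [h1 a hai, h1 x hxi]; exact e1, by rw [h1 b hbi]; exact e2⟩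
          · rw [Function.update_of_ne hua, Function.update_of_ne hux] at e1
            rw [Function.update_of_ne hub, Function.update_of_ne huy] at e2
            exact hc.2 a b x y hab hbx hxy hax hby hay ⟨e1, e2⟩

end StarHelpers

/-- **Theorem (characterization of minimal elements of `≺ₛ`).** A star coloring `c` of a
finite simple graph `G` is a minimal element of `≺ₛ` (i.e. no star recoloring step can be
performed on `c`) if and only if every color class of `c` contains a star b-vertex. -/

theorem minimal_iff_starBVertex [Fintype V] [DecidableEq V] (G : SimpleGraph V)
    (c : V → ℕ) (hc : IsStarColoring G c) :
    (∀ c', ¬ StarRecolorStep G c' c) ↔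
      ∀ i ∈ colorsUsed c, ∃ v, c v = i ∧ IsStarBVertex G c v := by
  constructor
  · -- Forward direction
    intro hmin i hi
    by_contra hno
    push_neg at hno
    have H : ∀ v, c v = i → ∃ d : V → ℕ,
        (∀ u, c u ≠ i → d u = c u) ∧ (∀ u, c u = i → ColorAvailableFor G c u (d u)) ∧
        ¬ ∃ u w b x, u ∈ P4System G c v ∧ w ∈ P4System G c v ∧
          G.Adj u b ∧ G.Adj b x ∧ G.Adj x w ∧ u ≠ x ∧ b ≠ w ∧ u ≠ w ∧
          d u = d x ∧ d b = d w := by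
      intro v hv
      have hnb := hno v hv
      rw [IsStarBVertex] at hnb
      push_neg at hnb
      obtain ⟨j, hav, hbl⟩ := hnb
      rw [BlockedForP4System] at hbl
      push_neg at hbl
      obtain ⟨d, g1, g2, g3, g4⟩ := hbl
      refine ⟨d, fun u h => g1 u (by rw [hv]; exact h),
        fun u h => g2 u (by rw [hv]; exact h), ?_⟩
      rintro ⟨u, w, b, x, m1, m2, a1, a2, a3, d1, d2, d3, e1, e2⟩
      exact g4 u w b x m1 m2 a1 a2 a3 d1 d2 d3 e1 e2
    have repc : ∀ v, c v = i → c (myRep G c v) = i :=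
      fun v hv => (myRTG_color (myRep_rel G c v)).trans hv
    let c' : V → ℕ := fun u =>
      if h : c u = i then (H (myRep G c u) (repc u h)).choose u else c u
    have hHeq : ∀ (p q : V) (hp : c p = i) (hq : c q = i), p = q →
        (H p hp).choose = (H q hq).choose := by rintro p q hp hq rfl; rfl
    have hc'pos : ∀ v (hv : c v = i), c' v = (H (myRep G c v) (repc v hv)).choose v :=
      fun v hv => dif_pos hv
    have hc'ne : ∀ v, c v ≠ i → c' v = c v := fun v hv => dif_neg hv
    have avail : ∀ v, c v = i → ColorAvailableFor G c v (c' v) := by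
      intro v hv
      rw [hc'pos v hv]
      exact (H (myRep G c v) (repc v hv)).choose_spec.2.1 v hv
    have propc' : ∀ ⦃p q⦄, G.Adj p q → c' p ≠ c' q := by
      intro p q hpq
      by_cases hp : c p = i
      · by_cases hq : c q = i
        · exact absurd (hp.trans hq.symm) (hc.1 hpq)
        · rw [hc'ne q hq]; exact myAvail_proper (avail p hp) hpq
      · by_cases hq : c q = i
        · rw [hc'ne p hp]
          exact fun h => myAvail_proper (avail q hq) hpq.symm h.symm
        · rw [hc'ne p hp, hc'ne q hq]; exact hc.1 hpq
    have starc' : IsStarColoring G c' := by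
      refine ⟨propc', ?_⟩
      intro a b x y hab hbx hxy hax hby hay hcon
      obtain ⟨e1, e2⟩ := hcon
      by_cases ha : c a = i <;> by_cases hb : c b = i <;>
        by_cases hx : c x = i <;> by_cases hy : c y = i
      all_goals try first
        | exact hc.1 hab (ha.trans hb.symm)
        | exact hc.1 hbx (hb.trans hx.symm)
        | exact hc.1 hxy (hx.trans hy.symm)
      -- {a,x}
      · refine hc.2 a b x y hab hbx hxy hax hby hay ⟨ha.trans hx.symm, ?_⟩
        rw [← hc'ne b hb, ← hc'ne y hy]; exact e2
      -- {a,y}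
      · have hax' : ¬ G.Adj a x := by
          intro hadj
          have h' := myAvail_proper (avail a ha) hadj
          rw [← hc'ne x hx] at h'
          exact h' e1
        have hby' : ¬ G.Adj b y := by
          intro hadj
          have h' := myAvail_proper (avail y hy) hadj.symm
          rw [← hc'ne b hb] at h'
          exact h' e2.symm
        have hay' : ¬ G.Adj a y := fun hadj => hc.1 hadj (ha.trans hy.symm)
        have hrel : P4Rel G c a y :=
          ⟨ha.trans hy.symm, b, x, hab, hbx, hxy, hax', hby', hay', hax, hby, hay⟩
        have hre : myRep G c y = myRep G c a := (myRep_eq G c hrel).symm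
        have spec := (H (myRep G c a) (repc a ha)).choose_spec
        have hda : c' a = (H (myRep G c a) (repc a ha)).choose a := hc'pos a ha
        have hdy : c' y = (H (myRep G c a) (repc a ha)).choose y := by
          rw [hc'pos y hy]
          exact congrFun (hHeq _ _ (repc y hy) (repc a ha) hre) y
        refine spec.2.2 ⟨a, y, b, x, myRep_rel G c a, (myRep_rel G c a).tail hrel,
          hab, hbx, hxy, hax, hby, hay, ?_, ?_⟩
        · rw [spec.1 x hx, ← hc'ne x hx, ← hda]; exact e1
        · rw [spec.1 b hb, ← hc'ne b hb, ← hdy]; exact e2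
      -- {a}
      · have hst := (myAvail_star (avail a ha)).2
        refine hst.2 a b x y hab hbx hxy hax hby hay ⟨?_, ?_⟩
        · rw [Function.update_self, Function.update_of_ne hax.symm,
            ← hc'ne x hx]; exact e1
        · rw [Function.update_of_ne hab.ne', Function.update_of_ne (Ne.symm hay),
            ← hc'ne b hb, ← hc'ne y hy]; exact e2
      -- {b,y}
      · refine hc.2 a b x y hab hbx hxy hax hby hay ⟨?_, hb.trans hy.symm⟩
        rw [← hc'ne a ha, ← hc'ne x hx]; exact e1
      -- {b}
      · have hst := (myAvail_star (avail b hb)).2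
        refine hst.2 a b x y hab hbx hxy hax hby hay ⟨?_, ?_⟩
        · rw [Function.update_of_ne hab.ne, Function.update_of_ne hbx.ne',
            ← hc'ne a ha, ← hc'ne x hx]; exact e1
        · rw [Function.update_self, Function.update_of_ne (Ne.symm hby),
            ← hc'ne y hy]; exact e2
      -- {x}
      · have hst := (myAvail_star (avail x hx)).2
        refine hst.2 a b x y hab hbx hxy hax hby hay ⟨?_, ?_⟩
        · rw [Function.update_of_ne hax, Function.update_self,
            ← hc'ne a ha]; exact e1
        · rw [Function.update_of_ne hbx.ne, Function.update_of_ne hxy.ne',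
            ← hc'ne b hb, ← hc'ne y hy]; exact e2
      -- {y}
      · have hst := (myAvail_star (avail y hy)).2
        refine hst.2 a b x y hab hbx hxy hax hby hay ⟨?_, ?_⟩
        · rw [Function.update_of_ne hay, Function.update_of_ne hxy.ne,
            ← hc'ne a ha, ← hc'ne x hx]; exact e1
        · rw [Function.update_of_ne hby, Function.update_self,
            ← hc'ne b hb]; exact e2
      -- none
      · refine hc.2 a b x y hab hbx hxy hax hby hay ⟨?_, ?_⟩
        · rw [← hc'ne a ha, ← hc'ne x hx]; exact e1
        · rw [← hc'ne b hb, ← hc'ne y hy]; exact e2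
    refine hmin c' ⟨hc, starc', i, hi, hc'ne, fun v hv => ⟨?_, (avail v hv).1⟩⟩
    rw [← hv]
    exact (myAvail_star (avail v hv)).1
  · -- Reverse direction
    intro hb c'' hstep
    obtain ⟨-, hc', i, hi, h1, h2⟩ := hstep
    obtain ⟨v, hv, hbv⟩ := hb i hi
    have avail : ∀ u, c u = c v → ColorAvailableFor G c u (c'' u) := by
      intro u hu
      rw [hv] at hu
      refine ⟨(h2 u hu).2, ?_⟩
      rw [ColorBlockedFor, not_or, not_not]
      refine ⟨by rw [hu]; exact (h2 u hu).1, ?_⟩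
      exact mySingleUpdate hc hc' h1 (fun w hw => (h2 w hw).1) hu
    obtain ⟨u, w, b, x, -, -, hub, hbx, hxw, hux, hbw, huw, e1, e2⟩ :=
      hbv (c'' v) (avail v rfl) c''
        (fun p hp => h1 p (by rwa [hv] at hp)) avail rfl
    exact hc'.2 u b x w hub hbx hxw hux hbw huw ⟨e1, e2⟩
end

section
/- For every positive integer n there exists a finite tree T with maximum degree Δ(T) = n whose star b-chromatic number attains the upper bound S_b(T) = Δ(T)² + 1 = n² + 1. -/
/-!
Definitions for star colorings, star recoloring steps, the strict partial order `≺ₛ`,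
star b-vertices, the star (b-)chromatic number, star degrees and related notions,
following Božović, Mesarič Štesl, Peterin,
"On star b-chromatic number of a graph".
-/

variable {V : Type*}

section TreeLemma
open SimpleGraph

lemma list_head_mem_append {α} {a b : α} {t l : List α} (h : a :: t = l ++ [b]) (hl : l ≠ []) :
    a ∈ l := by
  cases l with
  | nil => exact absurd rfl hl
  | cons e l' => simp only [List.cons_append, List.cons.injEq] at h; exact h.1 ▸ List.mem_cons_self

/-- Generic: a graph arising from a parent function with decreasing height is a tree. -/
lemma isTree_of_parent {V : Type*} (G : SimpleGraph V) (r : V) (gp : V → V) (h : V → ℕ)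
    (hr : gp r = r)
    (hup : ∀ v, v ≠ r → G.Adj v (gp v))
    (hdec : ∀ v, v ≠ r → h (gp v) < h v)
    (hadj : ∀ u v, G.Adj u v → gp u = v ∨ gp v = u) : G.IsTree := by
  classical
  have key : ∀ u w, G.Adj u w → h w ≤ h u → w = gp u := by
    intro u w huw hmax
    rcases hadj u w huw with h1 | h1
    · exact h1.symm
    · have hwr : w ≠ r := by
        rintro rfl
        rw [hr] at h1; subst h1
        exact G.irrefl huw
      have := hdec w hwr
      rw [h1] at this
      omega
  constructor
  · -- connected
    have hreach : ∀ k, ∀ v : V, h v ≤ k → G.Reachable v r := by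
      intro k
      induction k with
      | zero =>
        intro v hv
        by_cases hvr : v = r
        · subst hvr; exact SimpleGraph.Reachable.refl _
        · exact absurd (hdec v hvr) (by omega)
      | succ k ih =>
        intro v hv
        by_cases hvr : v = r
        · subst hvr; exact SimpleGraph.Reachable.refl _
        · exact ((hup v hvr).reachable).trans (ih (gp v) (by have := hdec v hvr; omega))
    haveI : Nonempty V := ⟨r⟩
    exact ⟨fun u v => (hreach (h u) u le_rfl).trans (hreach (h v) v le_rfl).symm⟩
  · -- acyclic
    intro v c hc
    have hne : c.support.toFinset.Nonempty := ⟨v, List.mem_toFinset.2 c.start_mem_support⟩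
    obtain ⟨u, hu, humax⟩ := c.support.toFinset.exists_max_image h hne
    rw [List.mem_toFinset] at hu
    have hmaxmem : ∀ z ∈ c.support, h z ≤ h u := fun z hz => humax z (List.mem_toFinset.2 hz)
    set c' := c.rotate u hu with hc'def
    have hc' : c'.IsCycle := hc.rotate hu
    have hsub : ∀ z ∈ c'.support, z ∈ c.support := by
      intro z hz
      rw [hc'def, Walk.rotate, Walk.mem_support_append_iff] at hz
      rcases hz with hz | hz
      · exact Walk.support_dropUntil_subset _ _ hz
      · exact Walk.support_takeUntil_subset _ _ hz
    have hlen : 3 ≤ c'.length := hc'.three_le_length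
    clear_value c'
    cases c' with
    | nil => exact hc'.ne_nil rfl
    | cons h₁ q =>
      rename_i w₁
      have hw₁mem : w₁ ∈ c.support := by
        apply hsub
        rw [Walk.support_cons]
        exact List.mem_cons_of_mem _ (Walk.start_mem_support q)
      have hw₁ : w₁ = gp u := key u w₁ h₁ (hmaxmem w₁ hw₁mem)
      obtain ⟨z, q', h', heq⟩ := Walk.exists_cons_eq_concat h₁ q
      have hzmem : z ∈ c.support := by
        apply hsub
        rw [heq, Walk.concat_eq_append, Walk.mem_support_append_iff]
        exact Or.inl (Walk.end_mem_support q')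
      have hz : z = gp u := key u z h'.symm (hmaxmem z hzmem)
      -- edges
      have hedges : s(u, w₁) :: q.edges = q'.edges ++ [s(z, u)] := by
        have h2 := congrArg Walk.edges heq
        rwa [Walk.edges_cons, Walk.concat_eq_append, Walk.edges_append, Walk.edges_cons,
          Walk.edges_nil] at h2
      have hnodup : (q'.edges ++ [s(z, u)]).Nodup := by
        have h3 := hc'.isCircuit.isTrail.edges_nodup
        rw [Walk.edges_cons, hedges] at h3
        exact h3
      have hqne : q'.edges ≠ [] := by
        intro hnil
        have h4 := congrArg List.length hedges
        rw [hnil] at h4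
        simp only [List.length_cons, Walk.length_edges, List.length_append, List.length_nil,
          List.length_singleton] at h4
        rw [Walk.length_cons] at hlen
        omega
      have hmem : s(u, w₁) ∈ q'.edges := list_head_mem_append hedges hqne
      rw [hw₁, ← hz] at hmem
      have hnm : s(z, u) ∉ q'.edges := by
        have h5 := List.disjoint_of_nodup_append hnodup
        intro hm
        exact h5 hm (List.mem_singleton_self _)
      exact hnm (Sym2.eq_swap ▸ hmem)
end TreeLemma

lemma sSup_eq_of_mem_of_le {s : Set ℕ} {a : ℕ} (ha : a ∈ s) (hb : ∀ b ∈ s, b ≤ a) :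
    sSup s = a :=
  le_antisymm (csSup_le ⟨a, ha⟩ hb) (le_csSup ⟨a, hb⟩ ha)

lemma ncard_neighborSet_eq_degree {W : Type*} [Fintype W] (G : SimpleGraph W)
    [DecidableRel G.Adj] (v : W) : (G.neighborSet v).ncard = G.degree v := by
  rw [Set.ncard_eq_toFinset_card']
  rfl

set_option linter.unusedSectionVars false

section Greedy

variable {W : Type*} [Fintype W] [DecidableEq W] (G : SimpleGraph W) [DecidableRel G.Adj]

/-- distance at most 2 (and distinct). -/
def Rel2 (v w : W) : Prop := w ≠ v ∧ (G.Adj v w ∨ ∃ m, G.Adj v m ∧ G.Adj m w)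

lemma Rel2.symm {v w : W} (h : Rel2 G v w) : Rel2 G w v := by
  obtain ⟨hne, h | ⟨m, h1, h2⟩⟩ := h
  · exact ⟨hne.symm, Or.inl h.symm⟩
  · exact ⟨hne.symm, Or.inr ⟨m, h2.symm, h1.symm⟩⟩

/-- the punctured ball of radius 2 around `v` as a finset. -/
def ball2 (v : W) : Finset W :=
  G.neighborFinset v ∪ (G.neighborFinset v).biUnion (fun m => G.neighborFinset m \ {v})

lemma mem_ball2_of_rel2 {v w : W} (h : Rel2 G v w) : w ∈ ball2 G v := by
  obtain ⟨hne, h | ⟨m, h1, h2⟩⟩ := h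
  · exact Finset.mem_union_left _ (by simpa using h)
  · refine Finset.mem_union_right _ (Finset.mem_biUnion.2 ⟨m, by simpa using h1, ?_⟩)
    exact Finset.mem_sdiff.2 ⟨by simpa using h2, by simpa using hne⟩

lemma card_ball2_le {n : ℕ} (hdeg : ∀ v, G.degree v ≤ n) (v : W) :
    (ball2 G v).card ≤ n ^ 2 := by
  have h1 : ((G.neighborFinset v).biUnion (fun m => G.neighborFinset m \ {v})).card
      ≤ n * (n - 1) := by
    calc ((G.neighborFinset v).biUnion (fun m => G.neighborFinset m \ {v})).card
        ≤ ∑ m ∈ G.neighborFinset v, (G.neighborFinset m \ {v}).card :=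
          Finset.card_biUnion_le
      _ ≤ ∑ _m ∈ G.neighborFinset v, (n - 1) := by
          refine Finset.sum_le_sum fun m hm => ?_
          have hv : v ∈ G.neighborFinset m := by
            simp only [SimpleGraph.mem_neighborFinset] at hm ⊢
            exact hm.symm
          have : (G.neighborFinset m \ {v}).card = G.degree m - 1 := by
            rw [Finset.card_sdiff_of_subset (by simpa using hv), Finset.card_singleton]
            rfl
          rw [this]
          exact Nat.sub_le_sub_right (hdeg m) 1
      _ = G.degree v * (n - 1) := by rw [Finset.sum_const, smul_eq_mul]; rfl
      _ ≤ n * (n - 1) := Nat.mul_le_mul_right _ (hdeg v)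
  calc (ball2 G v).card ≤ G.degree v + n * (n - 1) := by
        refine le_trans (Finset.card_union_le _ _) ?_
        exact Nat.add_le_add (le_of_eq rfl) h1
    _ ≤ n + n * (n - 1) := Nat.add_le_add_right (hdeg v) _
    _ ≤ n ^ 2 := by
        rcases n with _ | k
        · simp
        · simp only [Nat.succ_sub_one, pow_two]
          nlinarith

lemma exists_recolor {n : ℕ} (hdeg : ∀ v, G.degree v ≤ n) {c : W → ℕ}
    (hc : IsStarColoring G c) (hcard : n ^ 2 + 2 ≤ (colorsUsed c).card) :
    ∃ c', StarRecolorStep G c' c := by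
  classical
  set C := colorsUsed c with hC
  have hCne : C.Nonempty := Finset.card_pos.1 (by omega)
  obtain ⟨i, hi⟩ := hCne
  set classI : Finset W := Finset.univ.filter (fun v => c v = i) with hclassI
  have hmemclass : ∀ v, v ∈ classI ↔ c v = i := by
    intro v; simp [hclassI]
  -- greedy construction
  have greedy : ∀ S : Finset W, S ⊆ classI → ∃ g : W → ℕ, ∀ v ∈ S,
      g v ∈ C ∧ g v ≠ i ∧ (∀ w, Rel2 G v w → g v ≠ c w) ∧
      (∀ w ∈ S, Rel2 G v w → g v ≠ g w) := by
    intro S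
    induction S using Finset.induction_on with
    | empty => intro _; exact ⟨fun _ => 0, by simp⟩
    | @insert a S ha ih =>
      intro hsub
      obtain ⟨g', hg'⟩ := ih (fun w hw => hsub (Finset.mem_insert_of_mem hw))
      set forb : Finset ℕ :=
        ((ball2 G a).image c) ∪ ({i} ∪ ((ball2 G a ∩ classI)).image g') with hforb
      have hforbcard : forb.card ≤ n ^ 2 + 1 := by
        have hsub2 : forb ⊆ ((ball2 G a \ classI).image c) ∪
            ({i} ∪ ((ball2 G a ∩ classI)).image g') := by
          intro j hj
          rw [hforb, Finset.mem_union] at hj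
          rcases hj with hj | hj
          · obtain ⟨w, hw, rfl⟩ := Finset.mem_image.1 hj
            by_cases hwc : w ∈ classI
            · exact Finset.mem_union_right _ (Finset.mem_union_left _ (by
                simp [(hmemclass w).1 hwc]))
            · exact Finset.mem_union_left _ (Finset.mem_image.2 ⟨w, Finset.mem_sdiff.2 ⟨hw, hwc⟩, rfl⟩)
          · exact Finset.mem_union_right _ hj
        calc forb.card ≤ _ := Finset.card_le_card hsub2
          _ ≤ (ball2 G a \ classI).card + (1 + (ball2 G a ∩ classI).card) := by
              refine le_trans (Finset.card_union_le _ _) (Nat.add_le_add Finset.card_image_le ?_)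
              refine le_trans (Finset.card_union_le _ _) (Nat.add_le_add (le_of_eq rfl) ?_)
              exact Finset.card_image_le
          _ = (ball2 G a \ classI).card + (ball2 G a ∩ classI).card + 1 := by ring
          _ = (ball2 G a).card + 1 := by rw [Finset.card_sdiff_add_card_inter]
          _ ≤ n ^ 2 + 1 := Nat.add_le_add_right (card_ball2_le G hdeg a) 1
      have hdiff : (C \ forb).Nonempty := by
        rw [← Finset.card_pos]
        have := Finset.le_card_sdiff forb C
        omega
      obtain ⟨j, hj⟩ := hdiff
      rw [Finset.mem_sdiff] at hj
      refine ⟨Function.update g' a j, ?_⟩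
      intro v hv
      rcases Finset.mem_insert.1 hv with hva | hvS
      · have hva' : a = v := hva.symm
        subst hva'
        rw [Function.update_self]
        refine ⟨hj.1, ?_, ?_, ?_⟩
        · intro hji; exact hj.2 (by rw [hji, hforb]; simp)
        · intro w hw hjw
          refine hj.2 ?_
          rw [hforb]
          refine Finset.mem_union_left _ (Finset.mem_image.2 ⟨w, mem_ball2_of_rel2 G hw, hjw.symm⟩)
        · intro w hw hrel
          rcases Finset.mem_insert.1 hw with rfl | hwS
          · exact absurd rfl hrel.1
          · have hwa : w ≠ a := fun h => ha (h ▸ hwS)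
            rw [Function.update_of_ne hwa]
            intro hjw
            refine hj.2 ?_
            rw [hforb]
            refine Finset.mem_union_right _ (Finset.mem_union_right _ (Finset.mem_image.2
              ⟨w, Finset.mem_inter.2 ⟨mem_ball2_of_rel2 G hrel, hsub (Finset.mem_insert_of_mem hwS)⟩,
                hjw.symm⟩))
      · have hva : v ≠ a := fun h => ha (h ▸ hvS)
        rw [Function.update_of_ne hva]
        obtain ⟨hg1, hg2, hg3, hg4⟩ := hg' v hvS
        refine ⟨hg1, hg2, hg3, ?_⟩
        intro w hw hrel
        rcases Finset.mem_insert.1 hw with rfl | hwS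
        · rw [Function.update_self]
          intro hgj
          refine hj.2 ?_
          rw [hforb]
          refine Finset.mem_union_right _ (Finset.mem_union_right _ (Finset.mem_image.2
            ⟨v, Finset.mem_inter.2 ⟨mem_ball2_of_rel2 G hrel.symm, hsub (Finset.mem_insert_of_mem hvS)⟩,
              hgj⟩))
        · have hwa : w ≠ a := fun h => ha (h ▸ hwS)
          rw [Function.update_of_ne hwa]
          exact hg4 w hwS hrel
  obtain ⟨g, hg⟩ := greedy classI (Finset.Subset.refl _)
  set c' : W → ℕ := fun v => if c v = i then g v else c v with hc'
  have hc'on : ∀ v, c v = i → c' v = g v := by intro v hv; simp [hc', hv]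
  have hc'off : ∀ v, c v ≠ i → c' v = c v := by intro v hv; simp [hc', hv]
  -- key: equal new colors at distance ≤ 2 implies equal old colors, both off class
  have hkey : ∀ u w, Rel2 G u w → c' u = c' w → c u = c w ∧ c u ≠ i := by
    intro u w hrel heq
    by_cases hu : c u = i <;> by_cases hw : c w = i
    · exact absurd heq (by
        rw [hc'on u hu, hc'on w hw]
        exact (hg u ((hmemclass u).2 hu)).2.2.2 w ((hmemclass w).2 hw) hrel)
    · exact absurd heq (by
        rw [hc'on u hu, hc'off w hw]
        exact (hg u ((hmemclass u).2 hu)).2.2.1 w hrel)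
    · exact absurd heq (by
        rw [hc'on w hw, hc'off u hu]
        intro h
        exact (hg w ((hmemclass w).2 hw)).2.2.1 u hrel.symm h.symm)
    · rw [hc'off u hu, hc'off w hw] at heq
      exact ⟨heq, hu⟩
  have hstar : IsStarColoring G c' := by
    constructor
    · intro u w huw
      intro heq
      have hrel : Rel2 G u w := ⟨huw.ne', Or.inl huw⟩
      obtain ⟨heq2, _⟩ := hkey u w hrel heq
      exact hc.1 huw heq2
    · intro a b x y hab hbx hxy hax hby hay
      rintro ⟨h1, h2⟩
      obtain ⟨hax2, _⟩ := hkey a x ⟨Ne.symm hax, Or.inr ⟨b, hab, hbx⟩⟩ h1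
      obtain ⟨hby2, _⟩ := hkey b y ⟨Ne.symm hby, Or.inr ⟨x, hbx, hxy⟩⟩ h2
      exact hc.2 a b x y hab hbx hxy hax hby hay ⟨hax2, hby2⟩
  refine ⟨c', hc, hstar, i, hi, ?_, ?_⟩
  · exact hc'off
  · intro v hv
    rw [hc'on v hv]
    obtain ⟨h1, h2, _⟩ := hg v ((hmemclass v).2 hv)
    exact ⟨h2, h1⟩

end Greedy

namespace StarB

/-- The gadget shape: a root, `n` children `b s`, grandchildren `x s t`,
great-grandchildren `y s t` (where `n = p+2`). -/
inductive Gad (p : ℕ) : Type where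
  | root : Gad p
  | b (s : Fin (p + 2)) : Gad p
  | x (s : Fin (p + 2)) (t : Fin (p + 1)) : Gad p
  | y (s : Fin (p + 2)) (t : Fin (p + 1)) : Gad p
  deriving DecidableEq, Fintype

/-- number of colors / gadgets -/
abbrev NN (p : ℕ) : ℕ := (p + 2) ^ 2 + 1

/-- connection position alternates between 0 and 1 -/
def sig (p i : ℕ) : Fin (p + 2) := ⟨i % 2, by omega⟩

abbrev Vtx (p : ℕ) := Fin (NN p) × Gad p

/-- natural (within-gadget) parent -/
def gpar {p : ℕ} : Gad p → Option (Gad p)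
  | .root => none
  | .b _ => some .root
  | .x s _ => some (.b s)
  | .y s t => some (.x s t)

/-- the connecting edges between consecutive gadgets -/
def conn {p : ℕ} (u v : Vtx p) : Prop :=
  (v.1 : ℕ) = (u.1 : ℕ) + 1 ∧ u.2 = Gad.y (sig p u.1) 0 ∧ v.2 = Gad.y (sig p u.1) 0

instance {p : ℕ} : DecidablePred fun uv : Vtx p × Vtx p => conn uv.1 uv.2 := by
  intro uv; unfold conn; infer_instance

/-- The tree `T_n` (for `n = p+2`). -/
def TT (p : ℕ) : SimpleGraph (Vtx p) where
  Adj u v := (u.1 = v.1 ∧ gpar u.2 = some v.2) ∨ (u.1 = v.1 ∧ gpar v.2 = some u.2) ∨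
    conn u v ∨ conn v u
  symm := by
    constructor
    rintro u v (⟨h1, h2⟩ | ⟨h1, h2⟩ | h | h)
    · exact Or.inr (Or.inl ⟨h1.symm, h2⟩)
    · exact Or.inl ⟨h1.symm, h2⟩
    · exact Or.inr (Or.inr (Or.inr h))
    · exact Or.inr (Or.inr (Or.inl h))
  loopless := by
    constructor
    rintro ⟨i, w⟩ (⟨h1, h2⟩ | ⟨h1, h2⟩ | h | h)
    · cases w <;> simp [gpar] at h2
    · cases w <;> simp [gpar] at h2
    · exact absurd h.1 (by omega)
    · exact absurd h.1 (by omega)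

instance {p : ℕ} : DecidableRel (TT p).Adj := by
  intro u v
  have : Decidable (conn u v) := by unfold conn; infer_instance
  have : Decidable (conn v u) := by unfold conn; infer_instance
  unfold TT
  infer_instance

namespace Gad

variable {p : ℕ}

lemma adj_root_iff (i : Fin (NN p)) (v : Vtx p) :
    (TT p).Adj (i, .root) v ↔ ∃ s, v = (i, .b s) := by
  obtain ⟨j, w⟩ := v
  constructor
  · rintro (⟨h1, h2⟩ | ⟨h1, h2⟩ | h | h)
    · simp [gpar] at h2
    · cases w <;> simp_all [gpar]
    · exact absurd h.2.1 (by simp)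
    · exact absurd h.2.2 (by simp)
  · rintro ⟨s, hs⟩
    rw [Prod.mk.injEq] at hs
    exact Or.inr (Or.inl ⟨hs.1.symm, by rw [hs.2]; rfl⟩)

lemma adj_b_iff (i : Fin (NN p)) (s : Fin (p+2)) (v : Vtx p) :
    (TT p).Adj (i, .b s) v ↔ v = (i, .root) ∨ ∃ t, v = (i, .x s t) := by
  obtain ⟨j, w⟩ := v
  constructor
  · rintro (⟨h1, h2⟩ | ⟨h1, h2⟩ | h | h)
    · simp only [gpar, Option.some.injEq] at h2
      exact Or.inl (by rw [Prod.mk.injEq]; exact ⟨h1.symm, h2.symm⟩)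
    · cases w <;> simp_all [gpar]
    · exact absurd h.2.1 (by simp)
    · exact absurd h.2.2 (by simp)
  · rintro (hs | ⟨t, hs⟩) <;> rw [Prod.mk.injEq] at hs
    · exact Or.inl ⟨hs.1.symm, by rw [hs.2]; rfl⟩
    · exact Or.inr (Or.inl ⟨hs.1.symm, by rw [hs.2]; rfl⟩)

lemma adj_x_iff (i : Fin (NN p)) (s : Fin (p+2)) (t : Fin (p+1)) (v : Vtx p) :
    (TT p).Adj (i, .x s t) v ↔ v = (i, .b s) ∨ v = (i, .y s t) := by
  obtain ⟨j, w⟩ := v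
  constructor
  · rintro (⟨h1, h2⟩ | ⟨h1, h2⟩ | h | h)
    · simp only [gpar, Option.some.injEq] at h2
      exact Or.inl (by rw [Prod.mk.injEq]; exact ⟨h1.symm, h2.symm⟩)
    · cases w <;> simp_all [gpar]
    · exact absurd h.2.1 (by simp)
    · exact absurd h.2.2 (by simp)
  · rintro (hs | hs) <;> rw [Prod.mk.injEq] at hs
    · exact Or.inl ⟨hs.1.symm, by rw [hs.2]; rfl⟩
    · exact Or.inr (Or.inl ⟨hs.1.symm, by rw [hs.2]; rfl⟩)

lemma adj_y_iff (i : Fin (NN p)) (s : Fin (p+2)) (t : Fin (p+1)) (v : Vtx p) :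
    (TT p).Adj (i, .y s t) v ↔ v = (i, .x s t) ∨
      (∃ h : (i : ℕ) + 1 < NN p, s = sig p i ∧ t = 0 ∧ v = (⟨(i : ℕ) + 1, h⟩, .y (sig p i) 0)) ∨
      (∃ _ : (i : ℕ) ≠ 0, s = sig p ((i : ℕ) - 1) ∧ t = 0 ∧
        v = (⟨(i : ℕ) - 1, by omega⟩, .y (sig p ((i : ℕ) - 1)) 0)) := by
  obtain ⟨j, w⟩ := v
  constructor
  · rintro (⟨h1, h2⟩ | ⟨h1, h2⟩ | h | h)
    · simp only [gpar, Option.some.injEq] at h2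
      exact Or.inl (by rw [Prod.mk.injEq]; exact ⟨h1.symm, h2.symm⟩)
    · cases w <;> simp_all [gpar]
    · -- conn (i, y s t) (j, w)
      obtain ⟨hj, hu, hv⟩ := h
      simp only [Gad.y.injEq] at hj hu hv
      refine Or.inr (Or.inl ⟨by omega, hu.1, hu.2, ?_⟩)
      rw [Prod.mk.injEq]
      refine ⟨by apply Fin.ext; simp [hj], hv⟩
    · -- conn (j, w) (i, y s t)
      obtain ⟨hj, hu, hv⟩ := h
      simp only [Gad.y.injEq] at hj hu hv
      have hne : (i : ℕ) ≠ 0 := by omega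
      have hj' : (j : ℕ) = (i : ℕ) - 1 := by omega
      refine Or.inr (Or.inr ⟨hne, by rw [← hj']; exact hv.1, hv.2, ?_⟩)
      rw [Prod.mk.injEq]
      refine ⟨by apply Fin.ext; simp [hj'], by rw [hu, hj']⟩
  · rintro (hs | ⟨h, hs, ht, hv⟩ | ⟨h, hs, ht, hv⟩)
    · rw [Prod.mk.injEq] at hs
      exact Or.inl ⟨hs.1.symm, by rw [hs.2]; rfl⟩
    · rw [Prod.mk.injEq] at hv
      refine Or.inr (Or.inr (Or.inl ⟨by rw [hv.1], by simp only; rw [hs, ht], by rw [hv.2]⟩))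
    · rw [Prod.mk.injEq] at hv
      have hj1 : (j : ℕ) = (i : ℕ) - 1 := by rw [hv.1]
      refine Or.inr (Or.inr (Or.inr ⟨by simp only; omega, ?_, ?_⟩))
      · rw [hv.2, hj1]
      · simp only [Gad.y.injEq]
        rw [hj1]
        exact ⟨hs, ht⟩

end Gad

variable {p : ℕ}

/-- the color offset within a gadget -/
def loc : Gad p → ℕ
  | .root => 0
  | .b s => 1 + (s : ℕ)
  | .x s t => p + 3 + (s : ℕ) * (p + 1) + (t : ℕ)
  | .y s _ => 1 + (s : ℕ)

/-- The star coloring of `T` that witnesses `n² + 1` colors. -/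
def c0 : Vtx p → ℕ := fun u => ((u.1 : ℕ) + loc u.2) % NN p

lemma xloc_le (s : Fin (p+2)) (t : Fin (p+1)) : p + 3 + (s : ℕ) * (p + 1) + (t : ℕ) ≤ (p+2)^2 := by
  have h1 : (s : ℕ) * (p + 1) ≤ (p + 1) * (p + 1) :=
    Nat.mul_le_mul_right _ (by omega)
  have h2 : (p + 2)^2 = (p+1)*(p+1) + 2*p + 3 := by ring
  omega

lemma loc_lt (w : Gad p) : loc w < NN p := by
  cases w with
  | root => simp only [loc, NN]; positivity
  | b s => have := s.isLt; simp only [loc, NN]; nlinarith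
  | x s t => have := xloc_le s t; simp only [loc, NN]; omega
  | y s t => have := s.isLt; simp only [loc, NN]; nlinarith

lemma mod_inj {NV A B : ℕ} (h : A ≡ B [MOD NV]) (hA : A < NV) (hB : B < NV) : A = B := by
  unfold Nat.ModEq at h
  rwa [Nat.mod_eq_of_lt hA, Nat.mod_eq_of_lt hB] at h

/-- colors within the same gadget -/
lemma c0_same_iff {i : ℕ} {A B : ℕ} (hA : A < NN p) (hB : B < NN p) :
    (i + A) % NN p = (i + B) % NN p ↔ A = B := by
  constructor
  · intro h
    exact mod_inj ((Nat.ModEq.add_left_cancel' i) h) hA hB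
  · rintro rfl; rfl

/-- colors in consecutive gadgets -/
lemma c0_succ_iff {i : ℕ} {A B : ℕ} (hA : A < NN p) (hB : B < NN p) :
    (i + A) % NN p = ((i + 1) + B) % NN p ↔ (A = B + 1 ∨ (A = 0 ∧ B = NN p - 1)) := by
  have hrw : i + 1 + B = i + (B + 1) := by ring
  rw [hrw]
  by_cases hB1 : B + 1 = NN p
  · rw [hB1]
    have : (i + NN p) % NN p = (i + 0) % NN p := by
      rw [Nat.add_mod_right, Nat.add_zero]
    rw [this, c0_same_iff hA (by simp only [NN]; positivity)]
    constructor
    · rintro rfl; exact Or.inr ⟨rfl, by omega⟩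
    · rintro (h | ⟨h1, h2⟩); omega; exact h1
  · rw [c0_same_iff hA (by omega)]
    constructor
    · rintro rfl; exact Or.inl rfl
    · rintro (h | ⟨h1, h2⟩); exact h; omega

lemma c0_pair (i : Fin (NN p)) (w : Gad p) : c0 (i, w) = ((i : ℕ) + loc w) % NN p := rfl

lemma loc_b_lt (s : Fin (p+2)) : loc (Gad.b s) < p + 3 := by
  simp only [loc]; omega

lemma loc_y_lt (s : Fin (p+2)) (t : Fin (p+1)) : loc (Gad.y s t) < p + 3 := by
  simp only [loc]; omega

lemma loc_x_ge (s : Fin (p+2)) (t : Fin (p+1)) : p + 3 ≤ loc (Gad.x s t) := by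
  simp only [loc]; omega

lemma sig_succ_ne (k : ℕ) : sig p (k + 1) ≠ sig p k := by
  intro h
  have := congrArg Fin.val h
  simp only [sig] at this
  omega

lemma xloc_inj {s s' : Fin (p+2)} {t t' : Fin (p+1)}
    (h : loc (Gad.x s t) = loc (Gad.x s' t')) : s = s' ∧ t = t' := by
  simp only [loc] at h
  have hst : (s : ℕ) = s' ∧ (t : ℕ) = t' := by
    rcases Nat.lt_trichotomy (s : ℕ) (s' : ℕ) with hlt | heq | hgt
    · exfalso
      have h1 : ((s : ℕ) + 1) * (p+1) ≤ (s' : ℕ) * (p+1) := Nat.mul_le_mul_right _ (by omega)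
      rw [add_mul, one_mul] at h1
      have ht : (t : ℕ) < p + 1 := t.isLt
      generalize (s : ℕ) * (p+1) = q at h h1
      generalize (s' : ℕ) * (p+1) = q' at h h1
      omega
    · constructor
      · exact heq
      · rw [heq] at h
        generalize (s' : ℕ) * (p+1) = q at h
        omega
    · exfalso
      have h1 : ((s' : ℕ) + 1) * (p+1) ≤ (s : ℕ) * (p+1) := Nat.mul_le_mul_right _ (by omega)
      rw [add_mul, one_mul] at h1
      have ht : (t' : ℕ) < p + 1 := t'.isLt
      generalize (s : ℕ) * (p+1) = q at h h1
      generalize (s' : ℕ) * (p+1) = q' at h h1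
      omega
  exact ⟨Fin.ext hst.1, Fin.ext hst.2⟩

/-- contradiction helper: an `x (σ,0)` and the next gadget's entry leaf have different colors. -/
lemma H_AB (k : ℕ) (σv : Fin (p+2)) :
    (k + loc (Gad.x σv (0 : Fin (p+1)))) % NN p
      ≠ ((k+1) + loc (Gad.y σv (0 : Fin (p+1)))) % NN p := by
  intro h
  rw [c0_succ_iff (loc_lt _) (loc_lt _)] at h
  have hσ : (σv : ℕ) ≤ (σv : ℕ) * (p+1) := Nat.le_mul_of_pos_right _ (by omega)
  simp only [loc] at h
  rcases h with h | ⟨h, _⟩ <;> omega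

/-- contradiction helper: an `x (σ,0)` and the previous gadget's exit leaf have different colors. -/
lemma H_AC (k : ℕ) (σv : Fin (p+2)) :
    ((k+1) + loc (Gad.x σv (0 : Fin (p+1)))) % NN p
      ≠ (k + loc (Gad.y σv (0 : Fin (p+1)))) % NN p := by
  intro h
  rw [eq_comm, c0_succ_iff (loc_lt _) (loc_lt _)] at h
  have hσ : (σv : ℕ) ≤ (σv : ℕ) * (p+1) := Nat.le_mul_of_pos_right _ (by omega)
  simp only [loc] at h
  rcases h with h | ⟨h, _⟩ <;> omega

/-- `c0` is a proper coloring. -/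
lemma c0_proper : ∀ ⦃u w : Vtx p⦄, (TT p).Adj u w → c0 u ≠ c0 w := by
  rintro ⟨i, wu⟩ v hadj
  cases wu with
  | root =>
    rw [Gad.adj_root_iff] at hadj
    obtain ⟨s, rfl⟩ := hadj
    rw [c0_pair, c0_pair, Ne, c0_same_iff (loc_lt _) (loc_lt _)]
    simp only [loc]
    omega
  | b s =>
    rw [Gad.adj_b_iff] at hadj
    rcases hadj with rfl | ⟨t, rfl⟩ <;>
      rw [c0_pair, c0_pair, Ne, c0_same_iff (loc_lt _) (loc_lt _)]
    · simp only [loc]; omega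
    · have h3 := loc_b_lt s; have h4 := loc_x_ge s t; omega
  | x s t =>
    rw [Gad.adj_x_iff] at hadj
    rcases hadj with rfl | rfl <;>
      rw [c0_pair, c0_pair, Ne, c0_same_iff (loc_lt _) (loc_lt _)]
    · have := loc_b_lt s; have := loc_x_ge s t; omega
    · have := loc_y_lt s t; have := loc_x_ge s t; omega
  | y s t =>
    rw [Gad.adj_y_iff] at hadj
    rcases hadj with rfl | ⟨h, rfl, rfl, rfl⟩ | ⟨h, hs, ht, rfl⟩
    · rw [c0_pair, c0_pair, Ne, c0_same_iff (loc_lt _) (loc_lt _)]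
      have := loc_y_lt s t; have := loc_x_ge s t; omega
    · rw [c0_pair, c0_pair]
      simp only [Fin.val_mk]
      rw [Ne, c0_succ_iff (loc_lt _) (loc_lt _)]
      simp only [loc]
      rintro (h1 | ⟨h1, _⟩) <;> omega
    · subst hs; subst ht
      obtain ⟨k, hk⟩ : ∃ k, (i : ℕ) = k + 1 := ⟨(i : ℕ) - 1, by omega⟩
      rw [c0_pair, c0_pair]
      simp only [Fin.val_mk, hk, Nat.add_sub_cancel]
      rw [Ne, eq_comm, c0_succ_iff (loc_lt _) (loc_lt _)]
      simp only [loc]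
      rintro (h1 | ⟨h1, _⟩) <;> omega

/-- classification of equal-colored pairs at distance ≤ 2 : they are exactly
the designed pairs `{b s, y s t}` with common neighbor `x s t`. -/
lemma pair_classify {u m w : Vtx p} (h1 : (TT p).Adj m u) (h2 : (TT p).Adj m w)
    (hne : u ≠ w) (hcc : c0 u = c0 w) :
    ∃ i s t, m = (i, Gad.x s t) ∧
      ((u = (i, Gad.b s) ∧ w = (i, Gad.y s t)) ∨ (u = (i, Gad.y s t) ∧ w = (i, Gad.b s))) := by
  obtain ⟨j, wm⟩ := m
  cases wm with
  | root =>
    rw [Gad.adj_root_iff] at h1 h2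
    obtain ⟨s, rfl⟩ := h1
    obtain ⟨s', rfl⟩ := h2
    rw [c0_pair, c0_pair, c0_same_iff (loc_lt _) (loc_lt _)] at hcc
    simp only [loc] at hcc
    exact absurd (by rw [show s = s' from Fin.ext (by omega)]) hne
  | b s =>
    rw [Gad.adj_b_iff] at h1 h2
    rcases h1 with rfl | ⟨t, rfl⟩ <;> rcases h2 with rfl | ⟨t', rfl⟩
    · exact absurd rfl hne
    · exfalso
      rw [c0_pair, c0_pair, c0_same_iff (loc_lt _) (loc_lt _)] at hcc
      have h3 := loc_x_ge s t'
      simp only [loc] at hcc h3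
      omega
    · exfalso
      rw [c0_pair, c0_pair, c0_same_iff (loc_lt _) (loc_lt _)] at hcc
      have h3 := loc_x_ge s t
      simp only [loc] at hcc h3
      omega
    · rw [c0_pair, c0_pair, c0_same_iff (loc_lt _) (loc_lt _)] at hcc
      obtain ⟨hs, ht⟩ := xloc_inj hcc
      exact absurd (by rw [ht]) hne
  | x s t =>
    rw [Gad.adj_x_iff] at h1 h2
    rcases h1 with rfl | rfl <;> rcases h2 with rfl | rfl
    · exact absurd rfl hne
    · exact ⟨j, s, t, rfl, Or.inl ⟨rfl, rfl⟩⟩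
    · exact ⟨j, s, t, rfl, Or.inr ⟨rfl, rfl⟩⟩
    · exact absurd rfl hne
  | y s t =>
    rw [Gad.adj_y_iff] at h1 h2
    rcases h1 with rfl | ⟨hj1, hs1, ht1, rfl⟩ | ⟨hj1, hs1, ht1, rfl⟩ <;>
      rcases h2 with rfl | ⟨hj2, hs2, ht2, rfl⟩ | ⟨hj2, hs2, ht2, rfl⟩
    · exact absurd rfl hne
    · -- u = x(s,t) @ j, w = next leaf, with s = sig j, t = 0
      exfalso
      subst hs2; subst ht2
      rw [c0_pair, c0_pair] at hcc
      simp only [Fin.val_mk] at hcc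
      exact H_AB _ _ hcc
    · -- u = x(s,t) @ j, w = prev leaf, s = sig (j-1), t = 0
      exfalso
      subst hs2; subst ht2
      obtain ⟨k, hk⟩ : ∃ k, (j : ℕ) = k + 1 := ⟨(j : ℕ) - 1, by omega⟩
      rw [c0_pair, c0_pair] at hcc
      simp only [Fin.val_mk, hk, Nat.add_sub_cancel] at hcc
      exact H_AC _ _ hcc
    · -- u = next leaf, w = x(s,t)
      exfalso
      subst hs1; subst ht1
      rw [c0_pair, c0_pair] at hcc
      simp only [Fin.val_mk] at hcc
      exact H_AB _ _ hcc.symm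
    · exact absurd rfl hne
    · -- u = next leaf, w = prev leaf : s = sig j = sig (j-1), contradiction
      exfalso
      obtain ⟨k, hk⟩ : ∃ k, (j : ℕ) = k + 1 := ⟨(j : ℕ) - 1, by omega⟩
      rw [hk] at hs1 hs2
      simp only [Nat.add_sub_cancel] at hs2
      exact sig_succ_ne k (hs1.symm.trans hs2)
    · -- u = prev leaf, w = x(s,t)
      exfalso
      subst hs1; subst ht1
      obtain ⟨k, hk⟩ : ∃ k, (j : ℕ) = k + 1 := ⟨(j : ℕ) - 1, by omega⟩
      rw [c0_pair, c0_pair] at hcc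
      simp only [Fin.val_mk, hk, Nat.add_sub_cancel] at hcc
      exact H_AC _ _ hcc.symm
    · -- u = prev leaf, w = next leaf
      exfalso
      obtain ⟨k, hk⟩ : ∃ k, (j : ℕ) = k + 1 := ⟨(j : ℕ) - 1, by omega⟩
      rw [hk] at hs1 hs2
      simp only [Nat.add_sub_cancel] at hs1
      exact sig_succ_ne k (hs2.symm.trans hs1)
    · exact absurd rfl hne

lemma c0_star : IsStarColoring (TT p) (c0 : Vtx p → ℕ) := by
  refine ⟨c0_proper, ?_⟩
  rintro a b x y hab hbx hxy hax hby hay ⟨h1, h2⟩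
  obtain ⟨i, s, t, hm, hc⟩ := pair_classify hab.symm hbx hax h1
  obtain ⟨i', s', t', hm', hc'⟩ := pair_classify hbx.symm hxy hby h2
  rcases hc' with ⟨hb, _⟩ | ⟨hb, _⟩ <;> rw [hm] at hb <;>
    exact absurd (congrArg Prod.snd hb) (by simp)

lemma colorsUsed_c0 : colorsUsed (c0 : Vtx p → ℕ) = Finset.range (NN p) := by
  ext j
  simp only [colorsUsed, Finset.mem_image, Finset.mem_univ, true_and, Finset.mem_range]
  constructor
  · rintro ⟨v, rfl⟩
    exact Nat.mod_lt _ (by positivity)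
  · intro hj
    refine ⟨(⟨j, hj⟩, Gad.root), ?_⟩
    simp [c0, loc, Nat.mod_eq_of_lt hj]

lemma c0_root_val (i : Fin (NN p)) : c0 (i, (Gad.root : Gad p)) = (i : ℕ) := by
  simp [c0, loc, Nat.mod_eq_of_lt i.isLt]

lemma c0_ne_gadget (i : Fin (NN p)) (w : Gad p) (hw : loc w ≠ 0) :
    c0 (i, w) ≠ (i : ℕ) := by
  rw [c0_pair]
  intro h
  have h2 : ((i : ℕ) + loc w) % NN p = ((i : ℕ) + 0) % NN p := by
    rw [h, Nat.add_zero, Nat.mod_eq_of_lt i.isLt]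
  rw [c0_same_iff (loc_lt _) (by simp only [NN]; positivity)] at h2
  exact hw h2

/-- The coloring `c0` admits no star recoloring step. -/
lemma c0_no_step : ∀ c', ¬ StarRecolorStep (TT p) c' c0 := by
  rintro c' ⟨hs0, hs', i, hi, hoff, hon⟩
  rw [colorsUsed_c0, Finset.mem_range] at hi
  set iF : Fin (NN p) := ⟨i, hi⟩ with hiF
  set rt : Vtx p := (iF, Gad.root) with hrt
  have hcrt : c0 rt = i := c0_root_val iF
  obtain ⟨hne_i, hjC⟩ := hon rt hcrt
  set j := c' rt with hj
  have hjN : j < NN p := by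
    have := hjC
    rw [colorsUsed_c0, Finset.mem_range] at this
    exact this
  -- find the offset d with 1 ≤ d ≤ (p+2)^2 and (i + d) % N = j
  have hNN : NN p = (p+2)^2 + 1 := rfl
  obtain ⟨d, hd1, hd2, hd3⟩ : ∃ d, 1 ≤ d ∧ d ≤ (p+2)^2 ∧ (i + d) % NN p = j := by
    by_cases hij : i < j
    · exact ⟨j - i, by omega, by omega, by rw [show i + (j - i) = j by omega,
        Nat.mod_eq_of_lt hjN]⟩
    · refine ⟨j + NN p - i, by omega, by omega, ?_⟩
      rw [show i + (j + NN p - i) = j + NN p by omega, Nat.add_mod_right,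
        Nat.mod_eq_of_lt hjN]
  by_cases hdsmall : d ≤ p + 2
  · -- j is the color of a neighbor b (d-1) of the root: improper
    set vb : Vtx p := (iF, Gad.b ⟨d - 1, by omega⟩) with hvb
    have hcvb : c0 vb = j := by
      rw [← hd3, hvb, c0_pair]
      congr 1
      simp only [loc, Fin.val_mk]
      show i + (1 + (d - 1)) = i + d
      omega
    have hadj : (TT p).Adj rt vb := by
      rw [hrt, Gad.adj_root_iff]
      exact ⟨_, rfl⟩
    have hvb_off : c0 vb ≠ i := by rw [hcvb]; exact hne_i
    have : c' vb = j := by rw [hoff vb hvb_off, hcvb]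
    exact hs'.1 hadj (by rw [← hj, this])
  · -- j is the color of a grandchild x(s,t); use the path root - b s - x s t - y s t
    have hd4 : p + 3 ≤ d := by omega
    set e := d - (p + 3) with he
    have he2 : e ≤ p^2 + 3*p + 1 := by
      have : (p+2)^2 = p^2 + 4*p + 4 := by ring
      omega
    have hslt : e / (p + 1) < p + 2 := by
      rw [Nat.div_lt_iff_lt_mul (by omega)]
      have : (p + 2) * (p + 1) = p^2 + 3*p + 2 := by ring
      omega
    set s : Fin (p+2) := ⟨e / (p + 1), hslt⟩ with hs
    set t : Fin (p+1) := ⟨e % (p + 1), Nat.mod_lt _ (by omega)⟩ with ht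
    have hloc : loc (Gad.x s t) = d := by
      simp only [loc, hs, ht, Fin.val_mk]
      have := Nat.div_add_mod e (p + 1)
      have h5 : e / (p+1) * (p+1) = (p+1) * (e / (p+1)) := Nat.mul_comm _ _
      omega
    set vb : Vtx p := (iF, Gad.b s) with hvb
    set vx : Vtx p := (iF, Gad.x s t) with hvx
    set vy : Vtx p := (iF, Gad.y s t) with hvy
    have hcvx : c0 vx = j := by rw [hvx, c0_pair, hloc]; exact hd3
    have hcvx_ne : c0 vx ≠ i := by
      rw [hvx]
      exact c0_ne_gadget _ _ (by rw [hloc]; omega)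
    have hcvb_ne : c0 vb ≠ i := by
      rw [hvb]
      refine c0_ne_gadget _ _ ?_
      simp only [loc]
      generalize (e / (p + 1)) = q
      omega
    have hcvy_ne : c0 vy ≠ i := by
      rw [hvy]
      refine c0_ne_gadget _ _ ?_
      simp only [loc]
      generalize (e / (p + 1)) = q
      omega
    have hcby : c0 vb = c0 vy := rfl
    have hadj1 : (TT p).Adj rt vb := by rw [hrt, Gad.adj_root_iff]; exact ⟨_, rfl⟩
    have hadj2 : (TT p).Adj vb vx := by rw [hvb, Gad.adj_b_iff]; exact Or.inr ⟨_, rfl⟩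
    have hadj3 : (TT p).Adj vx vy := by rw [hvx, Gad.adj_x_iff]; exact Or.inr rfl
    refine hs'.2 rt vb vx vy hadj1 hadj2 hadj3 ?_ ?_ ?_ ⟨?_, ?_⟩
    · rw [hrt, hvx]; intro hq; exact absurd (congrArg Prod.snd hq) (by simp)
    · rw [hvb, hvy]; intro hq; exact absurd (congrArg Prod.snd hq) (by simp)
    · rw [hrt, hvy]; intro hq; exact absurd (congrArg Prod.snd hq) (by simp)
    · rw [← hj, hoff vx hcvx_ne, hcvx]
    · rw [hoff vb hcvb_ne, hoff vy hcvy_ne]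
      exact hcby

/-! ### Degrees -/

lemma degree_le (v : Vtx p) : (TT p).degree v ≤ p + 2 := by
  obtain ⟨i, w⟩ := v
  cases w with
  | root =>
    have hsub : (TT p).neighborFinset (i, Gad.root) ⊆
        Finset.univ.image (fun s : Fin (p+2) => ((i, Gad.b s) : Vtx p)) := by
      intro v hv
      rw [SimpleGraph.mem_neighborFinset, Gad.adj_root_iff] at hv
      obtain ⟨s, rfl⟩ := hv
      exact Finset.mem_image.2 ⟨s, Finset.mem_univ _, rfl⟩
    calc (TT p).degree (i, Gad.root) ≤ _ := Finset.card_le_card hsub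
      _ ≤ Finset.univ.card := Finset.card_image_le
      _ = p + 2 := by simp
  | b s =>
    have hsub : (TT p).neighborFinset (i, Gad.b s) ⊆
        insert ((i, Gad.root) : Vtx p)
          (Finset.univ.image (fun t : Fin (p+1) => ((i, Gad.x s t) : Vtx p))) := by
      intro v hv
      rw [SimpleGraph.mem_neighborFinset, Gad.adj_b_iff] at hv
      rcases hv with rfl | ⟨t, rfl⟩
      · exact Finset.mem_insert_self _ _
      · exact Finset.mem_insert_of_mem (Finset.mem_image.2 ⟨t, Finset.mem_univ _, rfl⟩)
    refine le_trans (Finset.card_le_card hsub) (le_trans (Finset.card_insert_le _ _) ?_)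
    have h3 := Finset.card_image_le (s := (Finset.univ : Finset (Fin (p+1))))
      (f := fun t => ((i, Gad.x s t) : Vtx p))
    simp only [Finset.card_univ, Fintype.card_fin] at h3
    omega
  | x s t =>
    have hsub : (TT p).neighborFinset (i, Gad.x s t) ⊆
        {((i, Gad.b s) : Vtx p), (i, Gad.y s t)} := by
      intro v hv
      rw [SimpleGraph.mem_neighborFinset, Gad.adj_x_iff] at hv
      rcases hv with rfl | rfl
      · exact Finset.mem_insert_self _ _
      · exact Finset.mem_insert_of_mem (by simp)
    calc (TT p).degree (i, Gad.x s t) ≤ _ := Finset.card_le_card hsub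
      _ ≤ 2 := Finset.card_le_two
      _ ≤ p + 2 := by omega
  | y s t =>
    by_cases hnext : (i : ℕ) + 1 < NN p ∧ s = sig p (i : ℕ) ∧ t = 0
    · have hsub : (TT p).neighborFinset (i, Gad.y s t) ⊆
          {((i, Gad.x s t) : Vtx p), (⟨(i : ℕ) + 1, hnext.1⟩, Gad.y (sig p (i : ℕ)) 0)} := by
        intro v hv
        rw [SimpleGraph.mem_neighborFinset, Gad.adj_y_iff] at hv
        rcases hv with rfl | ⟨h, hs, ht, rfl⟩ | ⟨h, hs, ht, rfl⟩
        · exact Finset.mem_insert_self _ _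
        · exact Finset.mem_insert_of_mem (by simp)
        · exfalso
          obtain ⟨k, hk⟩ : ∃ k, (i : ℕ) = k + 1 := ⟨(i : ℕ) - 1, by omega⟩
          rw [hk] at hs
          simp only [Nat.add_sub_cancel] at hs
          rw [hk] at hnext
          exact sig_succ_ne k (hnext.2.1.symm.trans hs)
      calc (TT p).degree (i, Gad.y s t) ≤ _ := Finset.card_le_card hsub
        _ ≤ 2 := Finset.card_le_two
        _ ≤ p + 2 := by omega
    · by_cases hprev : (i : ℕ) ≠ 0 ∧ s = sig p ((i : ℕ) - 1) ∧ t = 0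
      · have hsub : (TT p).neighborFinset (i, Gad.y s t) ⊆
            {((i, Gad.x s t) : Vtx p),
              (⟨(i : ℕ) - 1, by omega⟩, Gad.y (sig p ((i : ℕ) - 1)) 0)} := by
          intro v hv
          rw [SimpleGraph.mem_neighborFinset, Gad.adj_y_iff] at hv
          rcases hv with rfl | ⟨h, hs, ht, rfl⟩ | ⟨h, hs, ht, rfl⟩
          · exact Finset.mem_insert_self _ _
          · exact absurd ⟨h, hs, ht⟩ hnext
          · exact Finset.mem_insert_of_mem (by simp)
        calc (TT p).degree (i, Gad.y s t) ≤ _ := Finset.card_le_card hsub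
          _ ≤ 2 := Finset.card_le_two
          _ ≤ p + 2 := by omega
      · have hsub : (TT p).neighborFinset (i, Gad.y s t) ⊆
            {((i, Gad.x s t) : Vtx p)} := by
          intro v hv
          rw [SimpleGraph.mem_neighborFinset, Gad.adj_y_iff] at hv
          rcases hv with rfl | ⟨h, hs, ht, rfl⟩ | ⟨h, hs, ht, rfl⟩
          · exact Finset.mem_singleton_self _
          · exact absurd ⟨h, hs, ht⟩ hnext
          · exact absurd ⟨h, hs, ht⟩ hprev
        calc (TT p).degree (i, Gad.y s t) ≤ _ := Finset.card_le_card hsub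
          _ ≤ 1 := by simp
          _ ≤ p + 2 := by omega

lemma degree_root (i : Fin (NN p)) : (TT p).degree (i, (Gad.root : Gad p)) = p + 2 := by
  have heq : (TT p).neighborFinset (i, Gad.root) =
      Finset.univ.image (fun s : Fin (p+2) => ((i, Gad.b s) : Vtx p)) := by
    ext v
    rw [SimpleGraph.mem_neighborFinset, Gad.adj_root_iff]
    simp [eq_comm]
  rw [SimpleGraph.degree, heq, Finset.card_image_of_injective _ (by
    intro a b hab
    simpa using (congrArg Prod.snd hab))]
  simp

/-! ### The tree structure: parent and height -/

/-- The global parent function (reversing parent direction along entry branches). -/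
def gp : Vtx p → Vtx p := fun v =>
  match v with
  | (i, .root) => if (i : ℕ) = 0 then (i, .root) else (i, .b (sig p ((i : ℕ) - 1)))
  | (i, .b s) => if (i : ℕ) ≠ 0 ∧ s = sig p ((i : ℕ) - 1) then (i, .x s 0) else (i, .root)
  | (i, .x s t) =>
      if (i : ℕ) ≠ 0 ∧ s = sig p ((i : ℕ) - 1) ∧ t = 0 then (i, .y s 0) else (i, .b s)
  | (i, .y s t) =>
      if h : (i : ℕ) ≠ 0 ∧ s = sig p ((i : ℕ) - 1) ∧ t = 0 then
        (⟨(i : ℕ) - 1, by omega⟩, .y s 0)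
      else (i, .x s t)

/-- the height function -/
def ht : Vtx p → ℕ := fun v =>
  7 * (v.1 : ℕ) +
  match v with
  | (i, .root) => if (i : ℕ) = 0 then 0 else 3
  | (i, .b s) =>
      if (i : ℕ) ≠ 0 ∧ s = sig p ((i : ℕ) - 1) then 2 else if (i : ℕ) = 0 then 1 else 4
  | (i, .x s t) =>
      if (i : ℕ) ≠ 0 ∧ s = sig p ((i : ℕ) - 1) ∧ t = 0 then 1
      else if (i : ℕ) = 0 then 2 else if s = sig p ((i : ℕ) - 1) then 3 else 5
  | (i, .y s t) =>
      if (i : ℕ) ≠ 0 ∧ s = sig p ((i : ℕ) - 1) ∧ t = 0 then 0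
      else if (i : ℕ) = 0 then 3 else if s = sig p ((i : ℕ) - 1) then 4 else 6

lemma ht_le (v : Vtx p) : ht v ≤ 7 * (v.1 : ℕ) + 6 := by
  obtain ⟨i, w⟩ := v
  cases w <;> simp only [ht] <;> split_ifs <;> omega

lemma ht_ge (v : Vtx p) : 7 * (v.1 : ℕ) ≤ ht v := by
  obtain ⟨i, w⟩ := v
  cases w <;> simp only [ht] <;> split_ifs <;> omega

/-- the root of the whole tree -/
def rt0 : Vtx p := (⟨0, by positivity⟩, .root)

lemma gp_rt0 : gp (rt0 : Vtx p) = rt0 := by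
  simp [gp, rt0]

lemma ne_rt0 {i : Fin (NN p)} {w : Gad p} (h : ((i, w) : Vtx p) ≠ rt0) :
    (i : ℕ) ≠ 0 ∨ w ≠ .root := by
  by_contra hq
  push_neg at hq
  exact h (by rw [hq.2]; unfold rt0; rw [Prod.mk.injEq]; exact ⟨Fin.ext hq.1, rfl⟩)

lemma gp_adj : ∀ v : Vtx p, v ≠ rt0 → (TT p).Adj v (gp v) := by
  rintro ⟨i, w⟩ hne
  cases w with
  | root =>
    have hi : (i : ℕ) ≠ 0 := by
      rcases ne_rt0 hne with h | h
      · exact h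
      · exact absurd rfl h
    simp only [gp, if_neg hi]
    rw [Gad.adj_root_iff]
    exact ⟨_, rfl⟩
  | b s =>
    simp only [gp]
    split_ifs with h
    · rw [Gad.adj_b_iff]; exact Or.inr ⟨_, rfl⟩
    · rw [Gad.adj_b_iff]; exact Or.inl rfl
  | x s t =>
    simp only [gp]
    split_ifs with h
    · obtain ⟨h1, h2, rfl⟩ := h
      rw [Gad.adj_x_iff]; exact Or.inr rfl
    · rw [Gad.adj_x_iff]; exact Or.inl rfl
  | y s t =>
    simp only [gp]
    split_ifs with h
    · obtain ⟨h1, h2, rfl⟩ := h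
      rw [Gad.adj_y_iff]
      refine Or.inr (Or.inr ⟨h1, h2, rfl, ?_⟩)
      rw [Prod.mk.injEq]
      exact ⟨rfl, by rw [h2]⟩
    · rw [Gad.adj_y_iff]; exact Or.inl rfl

lemma ht_dec : ∀ v : Vtx p, v ≠ rt0 → ht (gp v) < ht v := by
  rintro ⟨i, w⟩ hne
  cases w with
  | root =>
    have hi : (i : ℕ) ≠ 0 := by
      rcases ne_rt0 hne with h | h
      · exact h
      · exact absurd rfl h
    simp only [gp, ht, if_neg hi]
    split_ifs with h
    · omega
    · exact absurd ⟨hi, trivial⟩ h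
  | b s =>
    simp only [gp, ht]
    split_ifs <;> simp_all [Fin.val_mk] <;> omega
  | x s t =>
    simp only [gp, ht]
    split_ifs <;> simp_all [Fin.val_mk] <;> omega
  | y s t =>
    by_cases hc : (i : ℕ) ≠ 0 ∧ s = sig p ((i : ℕ) - 1) ∧ t = 0
    · simp only [gp]
      rw [dif_pos hc]
      have h1 := ht_le ((⟨(i : ℕ) - 1, by omega⟩, Gad.y s 0) : Vtx p)
      have h2 : ht ((i, Gad.y s t) : Vtx p) = 7 * (i : ℕ) + 0 := by
        simp only [ht]
        rw [if_pos hc]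
      simp only [Fin.val_mk] at h1
      omega
    · simp only [gp]
      rw [dif_neg hc]
      simp only [ht]
      rw [if_neg hc, if_neg hc]
      split_ifs <;> omega

lemma gp_adj_cases : ∀ u v : Vtx p, (TT p).Adj u v → gp u = v ∨ gp v = u := by
  rintro ⟨i, w⟩ v hadj
  cases w with
  | root =>
    rw [Gad.adj_root_iff] at hadj
    obtain ⟨s, rfl⟩ := hadj
    by_cases hi : (i : ℕ) = 0
    · refine Or.inr ?_
      simp only [gp]
      rw [if_neg (by rintro ⟨h1, _⟩; exact h1 hi)]
    · by_cases hs : s = sig p ((i : ℕ) - 1)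
      · refine Or.inl ?_
        simp only [gp]
        rw [if_neg hi, hs]
      · refine Or.inr ?_
        simp only [gp]
        rw [if_neg (by rintro ⟨_, h2⟩; exact hs h2)]
  | b s =>
    rw [Gad.adj_b_iff] at hadj
    rcases hadj with rfl | ⟨t, rfl⟩
    · by_cases hi : (i : ℕ) = 0
      · refine Or.inl ?_
        simp only [gp]
        rw [if_neg (by rintro ⟨h1, _⟩; exact h1 hi)]
      · by_cases hs : s = sig p ((i : ℕ) - 1)
        · refine Or.inr ?_
          simp only [gp]
          rw [if_neg hi, hs]
        · refine Or.inl ?_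
          simp only [gp]
          rw [if_neg (by rintro ⟨_, h2⟩; exact hs h2)]
    · by_cases hc : (i : ℕ) ≠ 0 ∧ s = sig p ((i : ℕ) - 1) ∧ t = 0
      · refine Or.inl ?_
        simp only [gp]
        rw [if_pos ⟨hc.1, hc.2.1⟩, hc.2.2]
      · refine Or.inr ?_
        simp only [gp]
        rw [if_neg hc]
  | x s t =>
    rw [Gad.adj_x_iff] at hadj
    rcases hadj with rfl | rfl
    · by_cases hc : (i : ℕ) ≠ 0 ∧ s = sig p ((i : ℕ) - 1) ∧ t = 0
      · refine Or.inr ?_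
        simp only [gp]
        rw [if_pos ⟨hc.1, hc.2.1⟩, hc.2.2]
      · refine Or.inl ?_
        simp only [gp]
        rw [if_neg hc]
    · by_cases hc : (i : ℕ) ≠ 0 ∧ s = sig p ((i : ℕ) - 1) ∧ t = 0
      · refine Or.inl ?_
        simp only [gp]
        rw [if_pos hc, hc.2.2]
      · refine Or.inr ?_
        simp only [gp]
        rw [dif_neg hc]
  | y s t =>
    rw [Gad.adj_y_iff] at hadj
    rcases hadj with rfl | ⟨h, hs, ht', rfl⟩ | ⟨h, hs, ht', rfl⟩
    · by_cases hc : (i : ℕ) ≠ 0 ∧ s = sig p ((i : ℕ) - 1) ∧ t = 0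
      · refine Or.inr ?_
        simp only [gp]
        rw [if_pos hc, hc.2.2]
      · refine Or.inl ?_
        simp only [gp]
        rw [dif_neg hc]
    · -- v is the next gadget's entry leaf; gp v = u
      refine Or.inr ?_
      simp only [gp]
      split_ifs with h9
      · rw [Prod.mk.injEq]
        refine ⟨Fin.ext (by simp), by rw [hs, ht']⟩
      · exfalso
        refine h9 ⟨by simp, ?_, trivial⟩
        simp [Nat.add_sub_cancel]
    · -- v is the previous gadget's exit leaf; gp u = v
      refine Or.inl ?_
      simp only [gp]
      split_ifs with h9
      · rw [Prod.mk.injEq]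
        exact ⟨rfl, by rw [hs]⟩
      · exact absurd ⟨h, hs, ht'⟩ h9

lemma TT_isTree : (TT p).IsTree :=
  isTree_of_parent (TT p) rt0 gp ht gp_rt0 gp_adj ht_dec gp_adj_cases

lemma maxDeg_TT : maxDeg (TT p) = p + 2 := by
  apply sSup_eq_of_mem_of_le
  · exact ⟨((⟨0, by positivity⟩ : Fin (NN p)), Gad.root), by
      rw [ncard_neighborSet_eq_degree]; exact degree_root _⟩
  · rintro b ⟨v, rfl⟩
    rw [ncard_neighborSet_eq_degree]
    exact degree_le v

lemma card_colorsUsed_c0 : (colorsUsed (c0 : Vtx p → ℕ)).card = NN p := by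
  rw [colorsUsed_c0]; exact Finset.card_range _

lemma starB_TT : starBChromaticNumber (TT p) = NN p := by
  apply sSup_eq_of_mem_of_le
  · exact ⟨c0, ⟨c0_star, c0_no_step⟩, card_colorsUsed_c0⟩
  · rintro k ⟨c, ⟨hst, hnostep⟩, hcard⟩
    by_contra hk
    push_neg at hk
    obtain ⟨c', hc'⟩ := exists_recolor (TT p) (n := p + 2) degree_le hst (by
      rw [hcard]
      have : NN p = (p+2)^2 + 1 := rfl
      omega)
    exact hnostep c' hc'

end StarB

section Transport

variable {V₁ V₂ : Type*} [Fintype V₁] [Fintype V₂] [DecidableEq V₁] [DecidableEq V₂]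

/-- transfer of a graph along an equivalence of vertex types -/
def mapGraph (G₁ : SimpleGraph V₁) (e : V₁ ≃ V₂) : SimpleGraph V₂ where
  Adj a b := G₁.Adj (e.symm a) (e.symm b)
  symm := ⟨fun a b h => G₁.adj_symm h⟩
  loopless := ⟨fun a h => G₁.irrefl h⟩

variable (G₁ : SimpleGraph V₁) (e : V₁ ≃ V₂)

lemma mapGraph_adj (a b : V₂) :
    (mapGraph G₁ e).Adj a b ↔ G₁.Adj (e.symm a) (e.symm b) := Iff.rfl

lemma mapGraph_adj' (u v : V₁) : (mapGraph G₁ e).Adj (e u) (e v) ↔ G₁.Adj u v := by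
  rw [mapGraph_adj]
  simp

lemma colorsUsed_comp (c : V₂ → ℕ) : colorsUsed (c ∘ e) = colorsUsed c := by
  ext j
  simp only [colorsUsed, Finset.mem_image, Finset.mem_univ, true_and, Function.comp_apply]
  constructor
  · rintro ⟨v, rfl⟩; exact ⟨e v, rfl⟩
  · rintro ⟨v, rfl⟩; exact ⟨e.symm v, by simp⟩

lemma star_iff (c : V₂ → ℕ) :
    IsStarColoring (mapGraph G₁ e) c ↔ IsStarColoring G₁ (c ∘ e) := by
  constructor
  · rintro ⟨h1, h2⟩
    constructor
    · intro u w huw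
      exact h1 ((mapGraph_adj' G₁ e u w).2 huw)
    · intro a b x y hab hbx hxy hax hby hay
      refine h2 (e a) (e b) (e x) (e y) ((mapGraph_adj' G₁ e _ _).2 hab)
        ((mapGraph_adj' G₁ e _ _).2 hbx) ((mapGraph_adj' G₁ e _ _).2 hxy)
        (fun h => hax (e.injective h)) (fun h => hby (e.injective h))
        (fun h => hay (e.injective h))
  · rintro ⟨h1, h2⟩
    constructor
    · intro u w huw
      have := h1 ((mapGraph_adj G₁ e u w).1 huw)
      simpa using this
    · intro a b x y hab hbx hxy hax hby hay
      have := h2 (e.symm a) (e.symm b) (e.symm x) (e.symm y)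
        ((mapGraph_adj G₁ e _ _).1 hab) ((mapGraph_adj G₁ e _ _).1 hbx)
        ((mapGraph_adj G₁ e _ _).1 hxy)
        (fun h => hax (e.symm.injective h)) (fun h => hby (e.symm.injective h))
        (fun h => hay (e.symm.injective h))
      simpa using this

lemma step_iff (c' c : V₂ → ℕ) :
    StarRecolorStep (mapGraph G₁ e) c' c ↔ StarRecolorStep G₁ (c' ∘ e) (c ∘ e) := by
  unfold StarRecolorStep
  rw [star_iff, star_iff, colorsUsed_comp]
  constructor
  · rintro ⟨h1, h2, i, hi, h3, h4⟩
    refine ⟨h1, h2, i, hi, ?_, ?_⟩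
    · intro v hv; exact h3 (e v) hv
    · intro v hv; exact h4 (e v) hv
  · rintro ⟨h1, h2, i, hi, h3, h4⟩
    refine ⟨h1, h2, i, hi, ?_, ?_⟩
    · intro v hv
      have := h3 (e.symm v) (by simpa using hv)
      simpa using this
    · intro v hv
      have := h4 (e.symm v) (by simpa using hv)
      simpa using this

lemma isB_iff (c : V₂ → ℕ) :
    IsStarBColoring (mapGraph G₁ e) c ↔ IsStarBColoring G₁ (c ∘ e) := by
  unfold IsStarBColoring
  rw [star_iff]
  constructor
  · rintro ⟨h1, h2⟩
    refine ⟨h1, fun c₁ hc₁ => ?_⟩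
    refine h2 (c₁ ∘ e.symm) ?_
    rw [step_iff]
    have : (c₁ ∘ e.symm) ∘ e = c₁ := by funext v; simp
    rwa [this]
  · rintro ⟨h1, h2⟩
    refine ⟨h1, fun c₂ hc₂ => ?_⟩
    exact h2 (c₂ ∘ e) ((step_iff G₁ e c₂ c).1 hc₂)

lemma starB_eq : starBChromaticNumber (mapGraph G₁ e) = starBChromaticNumber G₁ := by
  unfold starBChromaticNumber
  congr 1
  ext k
  constructor
  · rintro ⟨c, hc, hcard⟩
    exact ⟨c ∘ e, (isB_iff G₁ e c).1 hc, by rwa [colorsUsed_comp]⟩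
  · rintro ⟨c, hc, hcard⟩
    refine ⟨c ∘ e.symm, ?_, ?_⟩
    · rw [isB_iff]
      have : (c ∘ e.symm) ∘ e = c := by funext v; simp
      rwa [this]
    · have : (c ∘ e.symm) ∘ e = c := by funext v; simp
      rw [← colorsUsed_comp (e := e) (c := c ∘ e.symm), this]
      exact hcard

lemma maxDeg_eq : maxDeg (mapGraph G₁ e) = maxDeg G₁ := by
  unfold maxDeg
  congr 1
  ext d
  have key : ∀ a : V₂, (mapGraph G₁ e).neighborSet a = e '' (G₁.neighborSet (e.symm a)) := by
    intro a
    ext w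
    simp only [SimpleGraph.mem_neighborSet, mapGraph_adj, Set.mem_image]
    constructor
    · intro h; exact ⟨e.symm w, h, by simp⟩
    · rintro ⟨z, hz, rfl⟩; simpa using hz
  constructor
  · rintro ⟨a, rfl⟩
    refine ⟨e.symm a, ?_⟩
    rw [key a, Set.ncard_image_of_injective _ e.injective]
  · rintro ⟨v, rfl⟩
    refine ⟨e v, ?_⟩
    rw [key (e v), Set.ncard_image_of_injective _ e.injective]
    simp

lemma isTree_map (h : G₁.IsTree) : (mapGraph G₁ e).IsTree := by
  obtain ⟨hconn, hacyc⟩ := h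
  have iso : G₁ ≃g mapGraph G₁ e := ⟨e, by intro a b; exact mapGraph_adj' G₁ e a b⟩
  constructor
  · exact hconn.map iso.toHom iso.toEquiv.surjective
  · intro v c hc
    have hc2 := hc.map (f := iso.symm.toHom) (by
      intro a b hab
      exact iso.symm.toEquiv.injective hab)
    exact hacyc _ hc2

end Transport

section OneCase

lemma colorsUsed_val : colorsUsed (fun v : Fin 2 => (v : ℕ)) = {0, 1} := by decide

lemma P2_starB : starBChromaticNumber (⊤ : SimpleGraph (Fin 2)) = 2 := by
  apply sSup_eq_of_mem_of_le
  · refine ⟨fun v => (v : ℕ), ⟨⟨?_, ?_⟩, ?_⟩, ?_⟩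
    · intro u w huw
      simp only [SimpleGraph.top_adj] at huw
      exact fun h => huw (Fin.ext h)
    · decide
    · rintro c' ⟨h1, h2, i, hi, hoff, hon⟩
      rw [colorsUsed_val] at hi
      have hadj : (⊤ : SimpleGraph (Fin 2)).Adj 0 1 := by decide
      rcases Finset.mem_insert.1 hi with rfl | hi1
      · have hoff1 : c' 1 = 1 := hoff 1 (by decide)
        obtain ⟨hne, hmem⟩ := hon 0 rfl
        rw [colorsUsed_val] at hmem
        have : c' 0 = 1 := by
          rcases Finset.mem_insert.1 hmem with h | h
          · exact absurd h hne
          · simpa using h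
        exact h2.1 hadj (by rw [this, hoff1])
      · rw [Finset.mem_singleton] at hi1
        subst hi1
        have hoff0 : c' 0 = 0 := hoff 0 (by decide)
        obtain ⟨hne, hmem⟩ := hon 1 rfl
        rw [colorsUsed_val] at hmem
        have : c' 1 = 0 := by
          rcases Finset.mem_insert.1 hmem with h | h
          · exact h
          · exact absurd (by simpa using h) hne
        exact h2.1 hadj (by rw [this, hoff0])
    · rw [colorsUsed_val]; decide
  · rintro k ⟨c, hc, rfl⟩
    calc (colorsUsed c).card ≤ (Finset.univ : Finset (Fin 2)).card := Finset.card_image_le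
      _ = 2 := by decide

lemma P2_maxDeg : maxDeg (⊤ : SimpleGraph (Fin 2)) = 1 := by
  apply sSup_eq_of_mem_of_le
  · exact ⟨0, by rw [ncard_neighborSet_eq_degree]; decide⟩
  · rintro b ⟨v, rfl⟩
    rw [ncard_neighborSet_eq_degree]
    fin_cases v <;> decide

lemma P2_isTree : (⊤ : SimpleGraph (Fin 2)).IsTree := by
  refine isTree_of_parent _ 0 (fun _ => 0) (fun v => (v : ℕ)) rfl ?_ ?_ ?_
  · intro v hv
    simp only [SimpleGraph.top_adj]
    exact hv
  · intro v hv
    fin_cases v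
    · exact absurd rfl hv
    · decide
  · decide

end OneCase


/-- **Theorem (sharpness of the bound `Sᵦ(G) ≤ Δ(G)² + 1`).** For every positive
integer `n` there exists a finite tree `T` with maximum degree `Δ(T) = n` and
`Sᵦ(T) = Δ(T)² + 1 = n² + 1`. -/
theorem exists_tree_starB_eq_maxDeg_sq_add_one (n : ℕ) (hn : 0 < n) :
    ∃ (m : ℕ) (T : SimpleGraph (Fin m)), T.IsTree ∧ maxDeg T = n ∧
      starBChromaticNumber T = n ^ 2 + 1 := by
  rcases Nat.lt_or_ge n 2 with hn2 | hn2
  · have : n = 1 := by omega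
    subst this
    exact ⟨2, ⊤, P2_isTree, P2_maxDeg, by norm_num [P2_starB]⟩
  · obtain ⟨p, rfl⟩ : ∃ p, n = p + 2 := ⟨n - 2, by omega⟩
    classical
    set e := Fintype.equivFin (StarB.Vtx p) with he
    refine ⟨Fintype.card (StarB.Vtx p), mapGraph (StarB.TT p) e, ?_, ?_, ?_⟩
    · exact isTree_map _ e StarB.TT_isTree
    · rw [maxDeg_eq]; exact StarB.maxDeg_TT
    · rw [starB_eq]; exact StarB.starB_TT
end

section
/- For every natural number M there exists a finite tree T with m_s(T) − S_b(T) > M; that is, the difference between the m_s-degree and the star b-chromatic number is unbounded on the class of trees. -/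
/-!
Definitions for star colorings, star recoloring steps, the strict partial order `≺ₛ`,
star b-vertices, the star (b-)chromatic number, star degrees and related notions,
following Božović, Mesarič Štesl, Peterin,
"On star b-chromatic number of a graph".
-/

variable {V : Type*}

namespace Bushy

variable (k r : ℕ)

abbrev VT := Unit ⊕ (Fin k ⊕ (Fin k ⊕ (Fin k × Fin r)))

variable {k r}

def vz : VT k r := Sum.inl ()
def vx (i : Fin k) : VT k r := Sum.inr (Sum.inl i)
def vy (i : Fin k) : VT k r := Sum.inr (Sum.inr (Sum.inl i))
def vw (i : Fin k) (s : Fin r) : VT k r := Sum.inr (Sum.inr (Sum.inr (i, s)))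

@[simp] lemma vz_ne_vx (i : Fin k) : (vz : VT k r) ≠ vx i := by simp [vz, vx]
@[simp] lemma vz_ne_vy (i : Fin k) : (vz : VT k r) ≠ vy i := by simp [vz, vy]
@[simp] lemma vz_ne_vw (i : Fin k) (s : Fin r) : (vz : VT k r) ≠ vw i s := by simp [vz, vw]
@[simp] lemma vx_ne_vy (i j : Fin k) : (vx i : VT k r) ≠ vy j := by simp [vy, vx]
@[simp] lemma vx_ne_vw (i j : Fin k) (s : Fin r) : (vx i : VT k r) ≠ vw j s := by simp [vw, vx]
@[simp] lemma vy_ne_vw (i j : Fin k) (s : Fin r) : (vy i : VT k r) ≠ vw j s := by simp [vy, vw]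
@[simp] lemma vx_inj {i j : Fin k} : (vx i : VT k r) = vx j ↔ i = j := by simp [vx]
@[simp] lemma vy_inj {i j : Fin k} : (vy i : VT k r) = vy j ↔ i = j := by simp [vy]
@[simp] lemma vw_inj {i j : Fin k} {s t : Fin r} :
    (vw i s : VT k r) = vw j t ↔ i = j ∧ s = t := by simp [vw, Prod.ext_iff]

/-- one-directional adjacency relation -/
def B (u v : VT k r) : Prop :=
  (∃ i, u = vz ∧ v = vx i) ∨ (∃ i, u = vx i ∧ v = vy i) ∨ (∃ i s, u = vy i ∧ v = vw i s)

def bush (k r : ℕ) : SimpleGraph (VT k r) where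
  Adj u v := B u v ∨ B v u
  symm := by constructor; intro u v h; tauto
  loopless := by
    constructor
    rintro u ((⟨i,rfl,h⟩|⟨i,rfl,h⟩|⟨i,s,rfl,h⟩)|(⟨i,rfl,h⟩|⟨i,rfl,h⟩|⟨i,s,rfl,h⟩)) <;> simp at h

lemma adj_zx (i : Fin k) : (bush k r).Adj vz (vx i) := Or.inl (Or.inl ⟨i, rfl, rfl⟩)
lemma adj_xy (i : Fin k) : (bush k r).Adj (vx i) (vy i) := Or.inl (Or.inr (Or.inl ⟨i, rfl, rfl⟩))
lemma adj_yw (i : Fin k) (s : Fin r) : (bush k r).Adj (vy i) (vw i s) :=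
  Or.inl (Or.inr (Or.inr ⟨i, s, rfl, rfl⟩))

lemma adj_z {u : VT k r} : (bush k r).Adj vz u ↔ ∃ i, u = vx i := by
  constructor
  · rintro ((⟨i,h1,h2⟩|⟨i,h1,h2⟩|⟨i,s,h1,h2⟩)|(⟨i,h1,h2⟩|⟨i,h1,h2⟩|⟨i,s,h1,h2⟩)) <;>
      simp_all [vz, vx, vy, vw]
  · rintro ⟨i, rfl⟩; exact adj_zx i

lemma adj_x {i : Fin k} {u : VT k r} : (bush k r).Adj (vx i) u ↔ u = vz ∨ u = vy i := by
  constructor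
  · rintro ((⟨j,h1,h2⟩|⟨j,h1,h2⟩|⟨j,s,h1,h2⟩)|(⟨j,h1,h2⟩|⟨j,h1,h2⟩|⟨j,s,h1,h2⟩)) <;>
      simp_all [vz, vx, vy, vw]
  · rintro (rfl | rfl)
    · exact ((bush k r).adj_symm (adj_zx i))
    · exact adj_xy i

lemma adj_y {i : Fin k} {u : VT k r} :
    (bush k r).Adj (vy i) u ↔ u = vx i ∨ ∃ s, u = vw i s := by
  constructor
  · rintro ((⟨j,h1,h2⟩|⟨j,h1,h2⟩|⟨j,s,h1,h2⟩)|(⟨j,h1,h2⟩|⟨j,h1,h2⟩|⟨j,s,h1,h2⟩)) <;>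
      simp_all [vz, vx, vy, vw]
  · rintro (rfl | ⟨s, rfl⟩)
    · exact ((bush k r).adj_symm (adj_xy i))
    · exact adj_yw i s

lemma adj_w {i : Fin k} {s : Fin r} {u : VT k r} :
    (bush k r).Adj (vw i s) u ↔ u = vy i := by
  constructor
  · rintro ((⟨j,h1,h2⟩|⟨j,h1,h2⟩|⟨j,t,h1,h2⟩)|(⟨j,h1,h2⟩|⟨j,h1,h2⟩|⟨j,t,h1,h2⟩)) <;>
      simp_all [vz, vx, vy, vw]
  · rintro rfl; exact ((bush k r).adj_symm (adj_yw i s))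


section StarChar
variable {k r : ℕ} {c : VT k r → ℕ}

/-- Sufficient conditions for a star coloring of the bush. -/
lemma star_of
    (h1 : ∀ i, c vz ≠ c (vx i))
    (h2 : ∀ i, c (vx i) ≠ c (vy i))
    (h3 : ∀ i s, c (vy i) ≠ c (vw i s))
    (hS1 : ∀ i j, i ≠ j → ¬(c (vx i) = c (vx j) ∧ c (vy i) = c vz))
    (hS2 : ∀ i s, ¬(c vz = c (vy i) ∧ c (vx i) = c (vw i s))) :
    IsStarColoring (bush k r) c := by
  constructor
  · -- properness
    intro u v huv
    rcases huv with (⟨i,rfl,rfl⟩|⟨i,rfl,rfl⟩|⟨i,s,rfl,rfl⟩)|(⟨i,rfl,rfl⟩|⟨i,rfl,rfl⟩|⟨i,s,rfl,rfl⟩)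
    · exact h1 i
    · exact h2 i
    · exact h3 i s
    · exact (h1 i).symm
    · exact (h2 i).symm
    · exact (h3 i s).symm
  · -- no bicolored P4
    intro a b x y hab hbx hxy hax hby hay
    -- case on the middle edge b-x
    rcases b with _ | (i | (i | ⟨i, s⟩))
    · -- b = z ; x = some x_i
      obtain ⟨i, rfl⟩ := adj_z.mp hbx
      obtain ⟨j, rfl⟩ := adj_z.mp ((bush k r).adj_symm hab)
      rcases adj_x.mp hxy with rfl | rfl
      · exact absurd rfl hby
      · rintro ⟨e1, e2⟩
        refine hS1 i j (fun h => hax ?_) ⟨e1.symm, e2.symm⟩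
        subst h; rfl
    · -- b = x_i
      have hb : (Sum.inr (Sum.inl i) : VT k r) = vx i := rfl
      rw [hb] at *
      rcases adj_x.mp hbx with rfl | rfl
      · -- x = z
        obtain ⟨j, rfl⟩ := adj_z.mp hxy
        rcases adj_x.mp ((bush k r).adj_symm hab) with rfl | rfl
        · exact absurd rfl hax
        · rintro ⟨e1, e2⟩
          refine hS1 i j (fun h => hby ?_) ⟨e2, e1⟩
          subst h; rfl
      · -- x = y_i
        rcases adj_y.mp hxy with rfl | ⟨s, rfl⟩
        · exact absurd rfl hby
        · rcases adj_x.mp ((bush k r).adj_symm hab) with rfl | rfl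
          · rintro ⟨e1, e2⟩; exact hS2 i s ⟨e1, e2⟩
          · exact absurd rfl hax
    · -- b = y_i
      have hb : (Sum.inr (Sum.inr (Sum.inl i)) : VT k r) = vy i := rfl
      rw [hb] at *
      rcases adj_y.mp hbx with rfl | ⟨s, rfl⟩
      · -- x = x_i
        rcases adj_x.mp hxy with rfl | rfl
        · -- y = z
          rcases adj_y.mp ((bush k r).adj_symm hab) with rfl | ⟨s, rfl⟩
          · exact absurd rfl hax
          · rintro ⟨e1, e2⟩; exact hS2 i s ⟨e2.symm, e1.symm⟩
        · exact absurd rfl hby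
      · -- x = w_i_s : neighbors of w are only y_i = b
        have := adj_w.mp hxy
        exact absurd this.symm hby
    · -- b = w_i_s : x = y_i, then a ∈ N(w) = {y_i} = {x}
      have hb : (Sum.inr (Sum.inr (Sum.inr (i, s))) : VT k r) = vw i s := rfl
      rw [hb] at *
      have hx := adj_w.mp hbx
      subst hx
      have := adj_w.mp ((bush k r).adj_symm hab)
      exact absurd this hax

/-- Necessary conditions (extraction). -/
lemma star_S1 (h : IsStarColoring (bush k r) c) :
    ∀ i j, i ≠ j → ¬(c (vx i) = c (vx j) ∧ c (vy i) = c vz) := by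
  intro i j hij ⟨e1, e2⟩
  exact h.2 (vx j) vz (vx i) (vy i) ((bush k r).adj_symm (adj_zx j)) (adj_zx i) (adj_xy i)
    (by simp [hij.symm, vx_inj]) (by simp) (by simp) ⟨e1.symm, e2.symm⟩

lemma star_S2 (h : IsStarColoring (bush k r) c) :
    ∀ i s, ¬(c vz = c (vy i) ∧ c (vx i) = c (vw i s)) := by
  intro i s ⟨e1, e2⟩
  exact h.2 vz (vx i) (vy i) (vw i s) (adj_zx i) (adj_xy i) (adj_yw i s)
    (by simp) (by simp) (by simp) ⟨e1, e2⟩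

end StarChar


section Witness
variable {k r : ℕ}

/-- `starDegree`'s defining set is bounded above. -/
lemma starDegree_bddAbove {α : Type*} [Fintype α] [DecidableEq α] (G : SimpleGraph α) (v : α) :
    BddAbove {n | ∃ c : α → ℕ, IsStarColoring G c ∧
      {j | j ∈ colorsUsed c ∧ ColorBlockedFor G c v j}.ncard = n} := by
  refine ⟨Fintype.card α, ?_⟩
  rintro n ⟨c, _, rfl⟩
  have h1 : {j | j ∈ colorsUsed c ∧ ColorBlockedFor G c v j} ⊆ ↑(colorsUsed c) := by
    intro j hj; exact hj.1
  calc {j | j ∈ colorsUsed c ∧ ColorBlockedFor G c v j}.ncard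
      ≤ (↑(colorsUsed c) : Set ℕ).ncard := Set.ncard_le_ncard h1 (colorsUsed c).finite_toSet
    _ = (colorsUsed c).card := Set.ncard_coe_finset _
    _ ≤ (Finset.univ : Finset α).card := Finset.card_image_le
    _ = Fintype.card α := Finset.card_univ

/-- From a single witness coloring blocking all colors `< L`, a star degree lower bound. -/
lemma starDegree_ge_of_witness {α : Type*} [Fintype α] [DecidableEq α] (G : SimpleGraph α)
    (v : α) (c : α → ℕ) (L : ℕ) (hc : IsStarColoring G c)
    (hblock : ∀ δ < L, δ ∈ colorsUsed c ∧ ColorBlockedFor G c v δ) :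
    L ≤ starDegree G v := by
  have hsub : (↑(Finset.range L) : Set ℕ) ⊆
      {j | j ∈ colorsUsed c ∧ ColorBlockedFor G c v j} := by
    intro j hj
    simp only [Finset.coe_range, Set.mem_Iio] at hj
    exact hblock j hj
  have hfin : {j | j ∈ colorsUsed c ∧ ColorBlockedFor G c v j}.Finite := by
    apply Set.Finite.subset (colorsUsed c).finite_toSet
    intro j hj; exact hj.1
  have hL : L ≤ {j | j ∈ colorsUsed c ∧ ColorBlockedFor G c v j}.ncard := by
    have h2 := Set.ncard_le_ncard hsub hfin
    rwa [Set.ncard_coe_finset, Finset.card_range] at h2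
  exact le_trans hL (le_csSup (starDegree_bddAbove G v) ⟨c, hc, rfl⟩)

/-- Witness coloring for the star degree of `x i`. -/
def Xwit (k r : ℕ) (i : Fin k) : VT k r → ℕ
  | Sum.inl _ => 0
  | Sum.inr (Sum.inl j) => (j : ℕ) + 1
  | Sum.inr (Sum.inr (Sum.inl _)) => 0
  | Sum.inr (Sum.inr (Sum.inr (j, s))) =>
      if j = i then k + 1 + (s : ℕ) else if (j : ℕ) = 0 then 2 else 1

@[simp] lemma Xwit_z (i : Fin k) : Xwit k r i vz = 0 := rfl
@[simp] lemma Xwit_x (i j : Fin k) : Xwit k r i (vx j) = (j : ℕ) + 1 := rfl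
@[simp] lemma Xwit_y (i j : Fin k) : Xwit k r i (vy j) = 0 := rfl
@[simp] lemma Xwit_w (i j : Fin k) (s : Fin r) :
    Xwit k r i (vw j s) = if j = i then k + 1 + (s : ℕ) else if (j : ℕ) = 0 then 2 else 1 := rfl

lemma Xwit_star (hk : 2 ≤ k) (i : Fin k) : IsStarColoring (bush k r) (Xwit k r i) := by
  apply star_of
  · intro j; simp
  · intro j; simp
  · intro j s
    simp only [Xwit_y, Xwit_w]
    split
    · omega
    · split <;> omega
  · intro i' j hne ⟨e1, e2⟩
    simp only [Xwit_x] at e1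
    exact hne (Fin.ext (by omega))
  · intro j s ⟨e1, e2⟩
    simp only [Xwit_x, Xwit_w] at e2
    have hj : (j : ℕ) < k := j.isLt
    split at e2
    · omega
    · split at e2 <;> omega

lemma Xwit_blocked (hk : 2 ≤ k) (i : Fin k) :
    ∀ δ < k + 1 + r, δ ∈ colorsUsed (Xwit k r i) ∧
      ColorBlockedFor (bush k r) (Xwit k r i) (vx i) δ := by
  intro δ hδ
  constructor
  · -- δ is used
    simp only [colorsUsed, Finset.mem_image, Finset.mem_univ, true_and]
    rcases Nat.lt_or_ge δ 1 with h | h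
    · exact ⟨vz, by simp; omega⟩
    · rcases Nat.lt_or_ge δ (k+1) with h2 | h2
      · exact ⟨vx ⟨δ - 1, by omega⟩, by simp; omega⟩
      · refine ⟨vw i ⟨δ - (k+1), by omega⟩, ?_⟩
        simp
        omega
  · -- δ is blocked
    rcases Nat.lt_or_ge δ 1 with h | h
    · -- δ = 0 : improper with z
      have hδ0 : δ = 0 := by omega
      subst hδ0
      refine Or.inr (fun hst => ?_)
      have := hst.1 (adj_zx i)
      rw [Function.update_of_ne (vz_ne_vx i), Function.update_self] at this
      simp at this
    · rcases Nat.lt_or_ge δ (k+1) with h2 | h2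
      · -- δ = j + 1 for j < k
        by_cases hji : δ = (i : ℕ) + 1
        · exact Or.inl (by simp [hji])
        · -- bicolored P4 (x_j, z, x_i, y_i)
          set j : Fin k := ⟨δ - 1, by omega⟩ with hj
          have hne : j ≠ i := by
            intro hcontra
            apply hji
            have : (j : ℕ) = δ - 1 := rfl
            omega
          refine Or.inr (fun hst => ?_)
          refine hst.2 (vx j) vz (vx i) (vy i) ((bush k r).adj_symm (adj_zx j)) (adj_zx i)
            (adj_xy i) (by simp [hne]) (by simp) (by simp) ?_
          constructor
          · rw [Function.update_of_ne (by simp [hne]), Function.update_self]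
            simp; have : (j : ℕ) = δ - 1 := rfl; omega
          · rw [Function.update_of_ne (vz_ne_vx i),
              Function.update_of_ne (by simp [vx, vy]), Xwit_z, Xwit_y]
      · -- δ = k+1+s : bicolored P4 (z, x_i, y_i, w_i_s)
        set s : Fin r := ⟨δ - (k+1), by omega⟩ with hs
        refine Or.inr (fun hst => ?_)
        refine hst.2 vz (vx i) (vy i) (vw i s) (adj_zx i) (adj_xy i) (adj_yw i s)
          (by simp) (by simp [vx, vw]) (by simp) ?_
        constructor
        · rw [Function.update_of_ne (vz_ne_vx i),
            Function.update_of_ne (by simp [vx, vy]), Xwit_z, Xwit_y]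
        · rw [Function.update_self, Function.update_of_ne (by simp [vx, vw])]
          simp
          have : (s : ℕ) = δ - (k+1) := rfl
          omega

/-- Witness coloring for the star degree of `y i`. -/
def Ywit (k r : ℕ) (i : Fin k) : VT k r → ℕ
  | Sum.inl _ => 0
  | Sum.inr (Sum.inl _) => 1
  | Sum.inr (Sum.inr (Sum.inl _)) => 2
  | Sum.inr (Sum.inr (Sum.inr (j, s))) => if j = i then 3 + (s : ℕ) else 1

@[simp] lemma Ywit_z (i : Fin k) : Ywit k r i vz = 0 := rfl
@[simp] lemma Ywit_x (i j : Fin k) : Ywit k r i (vx j) = 1 := rfl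
@[simp] lemma Ywit_y (i j : Fin k) : Ywit k r i (vy j) = 2 := rfl
@[simp] lemma Ywit_w (i j : Fin k) (s : Fin r) :
    Ywit k r i (vw j s) = if j = i then 3 + (s : ℕ) else 1 := rfl

lemma Ywit_star (i : Fin k) : IsStarColoring (bush k r) (Ywit k r i) := by
  apply star_of
  · intro j; simp
  · intro j; simp
  · intro j s; simp only [Ywit_y, Ywit_w]; split <;> omega
  · intro i' j hne ⟨e1, e2⟩; simp at e2
  · intro j s ⟨e1, e2⟩; simp at e1

lemma Ywit_blocked (hk : 2 ≤ k) (i : Fin k) :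
    ∀ δ < r + 3, δ ∈ colorsUsed (Ywit k r i) ∧
      ColorBlockedFor (bush k r) (Ywit k r i) (vy i) δ := by
  intro δ hδ
  have hi' : ∃ j : Fin k, j ≠ i := by
    rcases Nat.lt_or_ge 0 (i : ℕ) with h | h
    · exact ⟨⟨0, by omega⟩, by intro hc; have : (0:ℕ) = (i:ℕ) := congrArg Fin.val hc; omega⟩
    · exact ⟨⟨1, by omega⟩, by intro hc; have : (1:ℕ) = (i:ℕ) := congrArg Fin.val hc; omega⟩
  obtain ⟨j, hj⟩ := hi'
  constructor
  · simp only [colorsUsed, Finset.mem_image, Finset.mem_univ, true_and]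
    match δ, hδ with
    | 0, _ => exact ⟨vz, rfl⟩
    | 1, _ => exact ⟨vx i, rfl⟩
    | 2, _ => exact ⟨vy i, rfl⟩
    | (n+3), hn => exact ⟨vw i ⟨n, by omega⟩, by simp; omega⟩
  · match δ, hδ with
    | 2, _ => exact Or.inl (by simp)
    | 1, _ =>
      -- improper with x i
      refine Or.inr (fun hst => ?_)
      have := hst.1 (adj_xy i)
      rw [Function.update_of_ne (vx_ne_vy i i), Function.update_self] at this
      simp at this
    | 0, _ =>
      -- bicolored P4 (x_j, z, x_i, y_i)
      refine Or.inr (fun hst => ?_)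
      refine hst.2 (vx j) vz (vx i) (vy i) ((bush k r).adj_symm (adj_zx j)) (adj_zx i)
        (adj_xy i) (by simp [hj]) (by simp) (by simp) ?_
      constructor
      · rw [Function.update_of_ne (by simp), Function.update_of_ne (by simp)]; simp
      · rw [Function.update_of_ne (by simp), Function.update_self]; simp
    | (n+3), hn =>
      -- improper with w i n
      refine Or.inr (fun hst => ?_)
      have := hst.1 (adj_yw i ⟨n, by omega⟩)
      rw [Function.update_self, Function.update_of_ne (vy_ne_vw i i _).symm] at this
      simp at this
      omega

end Witness


section TreeMs
variable {k r : ℕ}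

lemma msDegree_ge (hk : 2 ≤ k) (hr : r + 3 = 2 * k) : 2 * k ≤ msDegree (bush k r) := by
  classical
  set s : Finset (VT k r) :=
    (Finset.univ.image (vx : Fin k → VT k r)) ∪ (Finset.univ.image (vy : Fin k → VT k r)) with hs
  have hxinj : Function.Injective (vx : Fin k → VT k r) := by
    intro a b h; simpa using h
  have hyinj : Function.Injective (vy : Fin k → VT k r) := by
    intro a b h; simpa using h
  have hdisj : Disjoint (Finset.univ.image (vx : Fin k → VT k r))
      (Finset.univ.image (vy : Fin k → VT k r)) := by
    rw [Finset.disjoint_left]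
    intro a ha hb
    simp only [Finset.mem_image, Finset.mem_univ, true_and] at ha hb
    obtain ⟨i, rfl⟩ := ha
    obtain ⟨j, hj⟩ := hb
    exact (vx_ne_vy i j) hj.symm
  have hcard : s.card = 2 * k := by
    rw [hs, Finset.card_union_of_disjoint hdisj,
      Finset.card_image_of_injective _ hxinj, Finset.card_image_of_injective _ hyinj]
    simp; ring
  have hdeg : ∀ v ∈ s, 2 * k - 1 ≤ starDegree (bush k r) v := by
    intro v hv
    rw [hs, Finset.mem_union] at hv
    rcases hv with hv | hv
    · simp only [Finset.mem_image, Finset.mem_univ, true_and] at hv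
      obtain ⟨i, rfl⟩ := hv
      have := starDegree_ge_of_witness (bush k r) (vx i) (Xwit k r i) (k + 1 + r)
        (Xwit_star hk i) (Xwit_blocked hk i)
      omega
    · simp only [Finset.mem_image, Finset.mem_univ, true_and] at hv
      obtain ⟨i, rfl⟩ := hv
      have := starDegree_ge_of_witness (bush k r) (vy i) (Ywit k r i) (r + 3)
        (Ywit_star i) (Ywit_blocked hk i)
      omega
  have hmem : 2 * k ∈ {m | ∃ t : Finset (VT k r), t.card = m ∧
      ∀ v ∈ t, m - 1 ≤ starDegree (bush k r) v} := ⟨s, hcard, hdeg⟩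
  have hbdd : BddAbove {m | ∃ t : Finset (VT k r), t.card = m ∧
      ∀ v ∈ t, m - 1 ≤ starDegree (bush k r) v} := by
    refine ⟨Fintype.card (VT k r), ?_⟩
    rintro m ⟨t, rfl, _⟩
    exact Finset.card_le_univ t
  exact le_csSup hbdd hmem

/-- Walks stay in adjacency-closed sets. -/
lemma walk_closed {α : Type*} {G : SimpleGraph α} (S : Set α)
    (hS : ∀ ⦃a b⦄, a ∈ S → G.Adj a b → b ∈ S) :
    ∀ {u v : α}, G.Walk u v → u ∈ S → v ∈ S := by
  intro u v p
  induction p with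
  | nil => exact id
  | cons h _ ih => exact fun hu => ih (hS hu h)

lemma bush_connected (hk : 2 ≤ k) : (bush k r).Connected := by
  rw [SimpleGraph.connected_iff_exists_forall_reachable]
  refine ⟨vz, ?_⟩
  intro v
  rcases v with _ | (i | (i | ⟨i, s⟩))
  · rfl
  · exact (adj_zx i).reachable
  · exact ((adj_zx i).reachable).trans (adj_xy i).reachable
  · exact (((adj_zx i).reachable).trans (adj_xy i).reachable).trans (adj_yw i s).reachable

lemma bush_acyclic : (bush k r).IsAcyclic := by
  rw [SimpleGraph.isAcyclic_iff_forall_adj_isBridge]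
  intro u v huv
  rw [SimpleGraph.isBridge_iff]
  -- deleting the edge disconnects u from v
  rcases huv with (⟨i,rfl,rfl⟩|⟨i,rfl,rfl⟩|⟨i,s,rfl,rfl⟩)|(⟨i,rfl,rfl⟩|⟨i,rfl,rfl⟩|⟨i,s,rfl,rfl⟩)
  · -- edge z - x i
    intro hreach
    set S : Set (VT k r) := {v | v = vx i ∨ v = vy i ∨ ∃ s, v = vw i s} with hSdef
    have hclosed : ∀ ⦃a b : VT k r⦄, a ∈ S →
        ((bush k r) \ SimpleGraph.fromEdgeSet {s(vz, vx i)}).Adj a b → b ∈ S := by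
      rintro a b ha hab
      rw [SimpleGraph.sdiff_adj, SimpleGraph.fromEdgeSet_adj] at hab
      obtain ⟨hadj, hne⟩ := hab
      rcases ha with rfl | rfl | ⟨t, rfl⟩
      · rcases adj_x.mp hadj with rfl | rfl
        · exfalso
          exact hne ⟨Set.mem_singleton_iff.mpr (Sym2.eq_swap), (vz_ne_vx i).symm⟩
        · exact Or.inr (Or.inl rfl)
      · rcases adj_y.mp hadj with rfl | ⟨t, rfl⟩
        · exact Or.inl rfl
        · exact Or.inr (Or.inr ⟨t, rfl⟩)
      · rw [adj_w.mp hadj]; exact Or.inr (Or.inl rfl)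
    obtain ⟨p⟩ := hreach.symm
    have := walk_closed S hclosed p (Or.inl rfl)
    simp only [hSdef, Set.mem_setOf_eq] at this
    rcases this with h | h | ⟨t, h⟩ <;> simp [vz, vx, vy, vw] at h
  · -- edge x i - y i
    intro hreach
    set S : Set (VT k r) := {v | v = vy i ∨ ∃ s, v = vw i s} with hSdef
    have hclosed : ∀ ⦃a b : VT k r⦄, a ∈ S →
        ((bush k r) \ SimpleGraph.fromEdgeSet {s(vx i, vy i)}).Adj a b → b ∈ S := by
      rintro a b ha hab
      rw [SimpleGraph.sdiff_adj, SimpleGraph.fromEdgeSet_adj] at hab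
      obtain ⟨hadj, hne⟩ := hab
      rcases ha with rfl | ⟨t, rfl⟩
      · rcases adj_y.mp hadj with rfl | ⟨t, rfl⟩
        · exfalso
          exact hne ⟨Set.mem_singleton_iff.mpr (Sym2.eq_swap), (vx_ne_vy i i).symm⟩
        · exact Or.inr ⟨t, rfl⟩
      · rw [adj_w.mp hadj]; exact Or.inl rfl
    obtain ⟨p⟩ := hreach.symm
    have := walk_closed S hclosed p (Or.inl rfl)
    simp only [hSdef, Set.mem_setOf_eq] at this
    rcases this with h | ⟨t, h⟩ <;> simp [vx, vy, vw] at h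
  · -- edge y i - w i s
    intro hreach
    set S : Set (VT k r) := {v | v = vw i s} with hSdef
    have hclosed : ∀ ⦃a b : VT k r⦄, a ∈ S →
        ((bush k r) \ SimpleGraph.fromEdgeSet {s(vy i, vw i s)}).Adj a b → b ∈ S := by
      rintro a b ha hab
      rw [SimpleGraph.sdiff_adj, SimpleGraph.fromEdgeSet_adj] at hab
      obtain ⟨hadj, hne⟩ := hab
      rcases ha with rfl
      rw [adj_w.mp hadj] at hne ⊢
      exfalso
      exact hne ⟨Set.mem_singleton_iff.mpr (Sym2.eq_swap), (vy_ne_vw i i s).symm⟩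
    obtain ⟨p⟩ := hreach.symm
    have := walk_closed S hclosed p rfl
    simp only [hSdef, Set.mem_setOf_eq] at this
    simp [vy, vw] at this
  · -- edge x i - z (reversed)
    intro hreach
    set S : Set (VT k r) := {v | v = vx i ∨ v = vy i ∨ ∃ s, v = vw i s} with hSdef
    have hclosed : ∀ ⦃a b : VT k r⦄, a ∈ S →
        ((bush k r) \ SimpleGraph.fromEdgeSet {s(vx i, vz)}).Adj a b → b ∈ S := by
      rintro a b ha hab
      rw [SimpleGraph.sdiff_adj, SimpleGraph.fromEdgeSet_adj] at hab
      obtain ⟨hadj, hne⟩ := hab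
      rcases ha with rfl | rfl | ⟨t, rfl⟩
      · rcases adj_x.mp hadj with rfl | rfl
        · exfalso; exact hne ⟨Set.mem_singleton_iff.mpr rfl, (vz_ne_vx i).symm⟩
        · exact Or.inr (Or.inl rfl)
      · rcases adj_y.mp hadj with rfl | ⟨t, rfl⟩
        · exact Or.inl rfl
        · exact Or.inr (Or.inr ⟨t, rfl⟩)
      · rw [adj_w.mp hadj]; exact Or.inr (Or.inl rfl)
    obtain ⟨p⟩ := hreach
    have := walk_closed S hclosed p (Or.inl rfl)
    simp only [hSdef, Set.mem_setOf_eq] at this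
    rcases this with h | h | ⟨t, h⟩ <;> simp [vz, vx, vy, vw] at h
  · -- edge y i - x i (reversed)
    intro hreach
    set S : Set (VT k r) := {v | v = vy i ∨ ∃ s, v = vw i s} with hSdef
    have hclosed : ∀ ⦃a b : VT k r⦄, a ∈ S →
        ((bush k r) \ SimpleGraph.fromEdgeSet {s(vy i, vx i)}).Adj a b → b ∈ S := by
      rintro a b ha hab
      rw [SimpleGraph.sdiff_adj, SimpleGraph.fromEdgeSet_adj] at hab
      obtain ⟨hadj, hne⟩ := hab
      rcases ha with rfl | ⟨t, rfl⟩
      · rcases adj_y.mp hadj with rfl | ⟨t, rfl⟩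
        · exfalso; exact hne ⟨Set.mem_singleton_iff.mpr rfl, (vx_ne_vy i i).symm⟩
        · exact Or.inr ⟨t, rfl⟩
      · rw [adj_w.mp hadj]; exact Or.inl rfl
    obtain ⟨p⟩ := hreach
    have := walk_closed S hclosed p (Or.inl rfl)
    simp only [hSdef, Set.mem_setOf_eq] at this
    rcases this with h | ⟨t, h⟩ <;> simp [vx, vy, vw] at h
  · -- edge w i s - y i (reversed)
    intro hreach
    set S : Set (VT k r) := {v | v = vw i s} with hSdef
    have hclosed : ∀ ⦃a b : VT k r⦄, a ∈ S →
        ((bush k r) \ SimpleGraph.fromEdgeSet {s(vw i s, vy i)}).Adj a b → b ∈ S := by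
      rintro a b ha hab
      rw [SimpleGraph.sdiff_adj, SimpleGraph.fromEdgeSet_adj] at hab
      obtain ⟨hadj, hne⟩ := hab
      rcases ha with rfl
      rw [adj_w.mp hadj] at hne ⊢
      exfalso
      exact hne ⟨Set.mem_singleton_iff.mpr rfl, (vy_ne_vw i i s).symm⟩
    obtain ⟨p⟩ := hreach
    have := walk_closed S hclosed p rfl
    simp only [hSdef, Set.mem_setOf_eq] at this
    simp [vy, vw] at this

lemma bush_isTree (hk : 2 ≤ k) : (bush k r).IsTree :=
  ⟨bush_connected hk, bush_acyclic⟩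

end TreeMs


section SbBound
variable {k r : ℕ}

def legOf (h0 : 0 < k) : VT k r → Fin k
  | Sum.inl _ => ⟨0, h0⟩
  | Sum.inr (Sum.inl i) => i
  | Sum.inr (Sum.inr (Sum.inl i)) => i
  | Sum.inr (Sum.inr (Sum.inr (i, _))) => i

@[simp] lemma legOf_x (h0 : 0 < k) (i : Fin k) : legOf (r := r) h0 (vx i) = i := rfl
@[simp] lemma legOf_y (h0 : 0 < k) (i : Fin k) : legOf (r := r) h0 (vy i) = i := rfl
@[simp] lemma legOf_w (h0 : 0 < k) (i : Fin k) (s : Fin r) :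
    legOf h0 (vw i s) = i := rfl

lemma mem_colorsUsed {α : Type*} [Fintype α] (c : α → ℕ) (v : α) : c v ∈ colorsUsed c := by
  simp only [colorsUsed, Finset.mem_image, Finset.mem_univ, true_and]
  exact ⟨v, rfl⟩

/-- Every star coloring of the bush with at least `k+3` colors admits a recoloring step. -/
lemma bush_step_of_many_colors (hk : 2 ≤ k) {c : VT k r → ℕ}
    (hstar : IsStarColoring (bush k r) c) (hcard : k + 3 ≤ (colorsUsed c).card) :
    ∃ c', StarRecolorStep (bush k r) c' c := by
  classical
  have h0 : 0 < k := by omega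
  set U := colorsUsed c with hU
  set Z0 := c vz with hZ0
  set Xs : Finset ℕ := Finset.image (fun i => c (vx i)) Finset.univ with hXs
  set Ys : Finset ℕ := Finset.image (fun i => c (vy i)) Finset.univ with hYs
  have hXsU : Xs ⊆ U := by
    intro a ha
    simp only [hXs, Finset.mem_image, Finset.mem_univ, true_and] at ha
    obtain ⟨i, rfl⟩ := ha; exact mem_colorsUsed c (vx i)
  have hYsU : Ys ⊆ U := by
    intro a ha
    simp only [hYs, Finset.mem_image, Finset.mem_univ, true_and] at ha
    obtain ⟨i, rfl⟩ := ha; exact mem_colorsUsed c (vy i)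
  have hXk : Xs.card ≤ k := by
    calc Xs.card ≤ (Finset.univ : Finset (Fin k)).card := Finset.card_image_le
      _ = k := by simp
  by_cases hA : ∃ γ ∈ U, γ ∉ insert Z0 (Xs ∪ Ys)
  · -- Case A : a color which only occurs on leaves
    obtain ⟨γ, hγU, hγnot⟩ := hA
    simp only [Finset.mem_insert, Finset.mem_union, not_or] at hγnot
    obtain ⟨hγz, hγx, hγy⟩ := hγnot
    have hγxi : ∀ i, c (vx i) ≠ γ := by
      intro i h
      apply hγx
      simp only [hXs, Finset.mem_image, Finset.mem_univ, true_and]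
      exact ⟨i, h⟩
    have hγyi : ∀ i, c (vy i) ≠ γ := by
      intro i h
      apply hγy
      simp only [hYs, Finset.mem_image, Finset.mem_univ, true_and]
      exact ⟨i, h⟩
    have hγzi : c vz ≠ γ := by
      intro h
      apply hγz
      rw [hZ0, h]
    -- targets
    have htgt : ∀ j : Fin k, ∃ δ ∈ U, δ ∉ ({γ, c (vy j), c (vx j)} : Finset ℕ) := by
      intro j
      apply Finset.not_subset.mp
      intro hsub
      have h3 : ({γ, c (vy j), c (vx j)} : Finset ℕ).card ≤ 3 := by
        apply le_trans (Finset.card_insert_le _ _)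
        have := Finset.card_insert_le (c (vy j)) ({c (vx j)} : Finset ℕ)
        simp at this ⊢
        omega
      have := Finset.card_le_card hsub
      omega
    choose D hD1 hD2 using htgt
    set c' : VT k r → ℕ := fun v => if c v = γ then D (legOf h0 v) else c v with hc'
    have hc'z : c' vz = c vz := if_neg hγzi
    have hc'x : ∀ j, c' (vx j) = c (vx j) := fun j => if_neg (hγxi j)
    have hc'y : ∀ j, c' (vy j) = c (vy j) := fun j => if_neg (hγyi j)
    refine ⟨c', hstar, ?_, γ, hγU, ?_, ?_⟩
    · -- c' is a star coloring
      apply star_of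
      · intro j; rw [hc'z, hc'x]; exact hstar.1 (adj_zx j)
      · intro j; rw [hc'x, hc'y]; exact hstar.1 (adj_xy j)
      · intro j s
        rw [hc'y]
        by_cases hw : c (vw j s) = γ
        · simp only [hc', if_pos hw]
          simp only [legOf_w]
          intro h
          have := hD2 j
          simp only [Finset.mem_insert, Finset.mem_singleton, not_or] at this
          exact this.2.1 h.symm
        · simp only [hc', if_neg hw]; exact hstar.1 (adj_yw j s)
      · intro i j hij
        rw [hc'x, hc'x, hc'y, hc'z]
        exact star_S1 hstar i j hij
      · intro j s
        rw [hc'z, hc'y, hc'x]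
        by_cases hw : c (vw j s) = γ
        · simp only [hc', if_pos hw]
          simp only [legOf_w]
          rintro ⟨e1, e2⟩
          have := hD2 j
          simp only [Finset.mem_insert, Finset.mem_singleton, not_or] at this
          exact this.2.2 e2.symm
        · simp only [hc', if_neg hw]; exact star_S2 hstar j s
    · intro v hv; exact if_neg hv
    · intro v hv
      simp only [hc', if_pos hv]
      constructor
      · intro h
        have := hD2 (legOf h0 v)
        simp only [Finset.mem_insert, Finset.mem_singleton, not_or] at this
        exact this.1 h
      · exact hD1 (legOf h0 v)
  · -- Case B : every color occurs on an internal vertex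
    have hB : ∀ α ∈ U, α = Z0 ∨ α ∈ Xs ∨ α ∈ Ys := by
      intro α hα
      by_contra hcon
      push_neg at hcon
      refine hA ⟨α, hα, ?_⟩
      simp only [Finset.mem_insert, Finset.mem_union, not_or]
      exact hcon
    set Fs : Finset ℕ := Ys \ (Xs ∪ {Z0}) with hFs
    have hFprop : ∀ φ ∈ Fs, φ ∈ Ys ∧ φ ∉ Xs ∧ φ ≠ Z0 := by
      intro φ hφ
      simp only [hFs, Finset.mem_sdiff, Finset.mem_union, Finset.mem_singleton, not_or] at hφ
      exact ⟨hφ.1, hφ.2.1, hφ.2.2⟩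
    have hF2 : 2 ≤ Fs.card := by
      have hsub : U ⊆ insert Z0 (Xs ∪ Fs) := by
        intro α hα
        rcases hB α hα with rfl | hx | hy
        · exact Finset.mem_insert_self _ _
        · exact Finset.mem_insert_of_mem (Finset.mem_union_left _ hx)
        · by_cases hXZ : α ∈ Xs
          · exact Finset.mem_insert_of_mem (Finset.mem_union_left _ hXZ)
          · by_cases hz : α = Z0
            · exact hz ▸ Finset.mem_insert_self _ _
            · refine Finset.mem_insert_of_mem (Finset.mem_union_right _ ?_)
              simp only [hFs, Finset.mem_sdiff, Finset.mem_union, Finset.mem_singleton, not_or]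
              exact ⟨hy, hXZ, hz⟩
      have h1 := Finset.card_le_card hsub
      have h2 := Finset.card_insert_le Z0 (Xs ∪ Fs)
      have h3 := Finset.card_union_le Xs Fs
      omega
    by_cases hB1 : ∃ ξ ∈ Xs, ξ ∉ Ys ∧ ξ ≠ Z0 ∧ ∀ j, c (vx j) = ξ → c (vy j) ≠ Z0
    · -- Case B1 : recolor the class of ξ
      obtain ⟨ξ, hξX, hξY, hξZ, hξy⟩ := hB1
      have hξyi : ∀ i, c (vy i) ≠ ξ := by
        intro i h
        apply hξY
        simp only [hYs, Finset.mem_image, Finset.mem_univ, true_and]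
        exact ⟨i, h⟩
      have hξzi : c vz ≠ ξ := by
        intro h
        apply hξZ
        rw [hZ0, h]
      have htgt : ∀ j : Fin k, ∃ φ ∈ Fs, φ ≠ c (vy j) := by
        intro j
        have : ¬ Fs ⊆ {c (vy j)} := by
          intro hsub
          have := Finset.card_le_card hsub
          simp at this
          omega
        obtain ⟨φ, hφ1, hφ2⟩ := Finset.not_subset.mp this
        exact ⟨φ, hφ1, by simpa using hφ2⟩
      choose E hE1 hE2 using htgt
      have hEX : ∀ j i, E j ≠ c (vx i) := by
        intro j i h
        apply (hFprop _ (hE1 j)).2.1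
        simp only [hXs, Finset.mem_image, Finset.mem_univ, true_and]
        exact ⟨i, h.symm⟩
      have hEZ : ∀ j, E j ≠ Z0 := fun j => (hFprop _ (hE1 j)).2.2
      have hEU : ∀ j, E j ∈ U := fun j => hYsU (hFprop _ (hE1 j)).1
      have hEξ : ∀ j, E j ≠ ξ := by
        intro j h
        exact (hFprop _ (hE1 j)).2.1 (h ▸ hξX)
      set c' : VT k r → ℕ := fun v => if c v = ξ then E (legOf h0 v) else c v with hc'
      have hc'z : c' vz = c vz := if_neg hξzi
      have hc'y : ∀ j, c' (vy j) = c (vy j) := fun j => if_neg (hξyi j)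
      refine ⟨c', hstar, ?_, ξ, hXsU hξX, ?_, ?_⟩
      · apply star_of
        · intro j
          rw [hc'z]
          by_cases hx : c (vx j) = ξ
          · simp only [hc', if_pos hx]; simp only [legOf_x]
            exact fun h => hEZ j h.symm
          · simp only [hc', if_neg hx]; exact hstar.1 (adj_zx j)
        · intro j
          rw [hc'y]
          by_cases hx : c (vx j) = ξ
          · simp only [hc', if_pos hx]; simp only [legOf_x]
            exact hE2 j
          · simp only [hc', if_neg hx]; exact hstar.1 (adj_xy j)
        · intro j s
          rw [hc'y]
          by_cases hw : c (vw j s) = ξ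
          · simp only [hc', if_pos hw]; simp only [legOf_w]
            exact fun h => (hE2 j) h.symm
          · simp only [hc', if_neg hw]; exact hstar.1 (adj_yw j s)
        · intro i j hij
          rw [hc'y, hc'z]
          rintro ⟨e1, e2⟩
          -- c (vy i) = Z0, so c (vx i) ≠ ξ
          have hxi : c (vx i) ≠ ξ := fun h => hξy i h e2
          simp only [hc'] at e1
          simp only [if_neg hxi] at e1
          by_cases hxj : c (vx j) = ξ
          · simp only [if_pos hxj, legOf_x] at e1
            exact hEX j i e1.symm
          · simp only [if_neg hxj] at e1
            exact star_S1 hstar i j hij ⟨e1, e2⟩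
        · intro j s
          rw [hc'z, hc'y]
          rintro ⟨e1, e2⟩
          have hyj : c (vy j) = Z0 := e1.symm
          have hxj : c (vx j) ≠ ξ := fun h => hξy j h hyj
          simp only [hc'] at e2
          simp only [if_neg hxj] at e2
          by_cases hw : c (vw j s) = ξ
          · simp only [if_pos hw, legOf_w] at e2
            exact hEX j j e2.symm
          · simp only [if_neg hw] at e2
            exact star_S2 hstar j s ⟨e1, e2⟩
      · intro v hv; exact if_neg hv
      · intro v hv
        simp only [hc', if_pos hv]
        exact ⟨hEξ _, hEU _⟩
    · -- Case B2 : counting contradiction, no step needed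
      exfalso
      push_neg at hB1
      have hex : ∀ α ∈ U.erase Z0, ∃ j : Fin k,
          c (vy j) = α ∨ (c (vx j) = α ∧ c (vy j) = Z0) := by
        intro α hα
        have hαZ : α ≠ Z0 := (Finset.mem_erase.mp hα).1
        have hαU : α ∈ U := (Finset.mem_erase.mp hα).2
        rcases hB α hαU with rfl | hx | hy
        · exact absurd rfl hαZ
        · by_cases hy : α ∈ Ys
          · simp only [hYs, Finset.mem_image, Finset.mem_univ, true_and] at hy
            obtain ⟨j, hj⟩ := hy
            exact ⟨j, Or.inl hj⟩
          · obtain ⟨j, hj1, hj2⟩ := hB1 α hx hy hαZ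
            exact ⟨j, Or.inr ⟨hj1, hj2⟩⟩
        · simp only [hYs, Finset.mem_image, Finset.mem_univ, true_and] at hy
          obtain ⟨j, hj⟩ := hy
          exact ⟨j, Or.inl hj⟩
      set g : ℕ → Fin k := fun α =>
        if h : α ∈ U.erase Z0 then Classical.choose (hex α h) else ⟨0, h0⟩ with hg
      have hgspec : ∀ α (h : α ∈ U.erase Z0),
          c (vy (g α)) = α ∨ (c (vx (g α)) = α ∧ c (vy (g α)) = Z0) := by
        intro α h
        rw [hg]
        simp only [dif_pos h]
        exact Classical.choose_spec (hex α h)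
      have hinj : Set.InjOn g (U.erase Z0) := by
        intro α hα β hβ hgab
        rcases hgspec α hα with h1 | ⟨h1, h1'⟩ <;> rcases hgspec β hβ with h2 | ⟨h2, h2'⟩
        · rw [← h1, ← h2, hgab]
        · exfalso
          rw [hgab] at h1
          rw [h1] at h2'
          exact (Finset.mem_erase.mp hα).1 h2'
        · exfalso
          rw [← hgab] at h2
          rw [h2] at h1'
          exact (Finset.mem_erase.mp hβ).1 h1'
        · rw [← h1, ← h2, hgab]
      have hcle : (U.erase Z0).card ≤ k := by
        have := Finset.card_le_card_of_injOn g (fun a _ => Finset.mem_univ (g a)) hinj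
        simpa using this
      have hZ0U : Z0 ∈ U := mem_colorsUsed c vz
      have := Finset.card_erase_of_mem hZ0U
      omega

/-- Any star b-coloring of the bush uses at most `k+2` colors. -/
lemma bush_starB_card_le (hk : 2 ≤ k) {c : VT k r → ℕ}
    (hb : IsStarBColoring (bush k r) c) : (colorsUsed c).card ≤ k + 2 := by
  by_contra hcon
  push_neg at hcon
  obtain ⟨c', hc'⟩ := bush_step_of_many_colors hk hb.1 (by omega)
  exact hb.2 c' hc'

lemma bush_starB_le (hk : 2 ≤ k) : starBChromaticNumber (bush k r) ≤ k + 2 := by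
  rw [starBChromaticNumber]
  rcases Set.eq_empty_or_nonempty
    {n | ∃ c : VT k r → ℕ, IsStarBColoring (bush k r) c ∧ (colorsUsed c).card = n} with h | h
  · rw [h]
    simp
  · apply csSup_le h
    rintro n ⟨c, hc, rfl⟩
    exact bush_starB_card_le hk hc

end SbBound


section Transfer
variable {α β : Type*} [Fintype α] [DecidableEq α] [Fintype β] [DecidableEq β]
  (e : α ≃ β) (G : SimpleGraph α)

/-- Transport a graph along an equivalence of vertex types. -/
def pushGraph : SimpleGraph β where
  Adj a b := G.Adj (e.symm a) (e.symm b)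
  symm := ⟨fun _ _ h => G.adj_symm h⟩
  loopless := ⟨fun _ h => G.irrefl h⟩

@[simp] lemma pushGraph_adj (a b : β) :
    (pushGraph e G).Adj a b ↔ G.Adj (e.symm a) (e.symm b) := Iff.rfl

lemma push_isStar (c : β → ℕ) :
    IsStarColoring (pushGraph e G) c ↔ IsStarColoring G (c ∘ e) := by
  constructor
  · rintro ⟨h1, h2⟩
    constructor
    · intro u w huw
      have := h1 (u := e u) (w := e w) (by simpa using huw)
      simpa using this
    · intro a b x y hab hbx hxy hax hby hay
      have := h2 (e a) (e b) (e x) (e y) (by simpa) (by simpa) (by simpa)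
        (e.injective.ne hax) (e.injective.ne hby) (e.injective.ne hay)
      simpa using this
  · rintro ⟨h1, h2⟩
    constructor
    · intro u w huw
      have := h1 (u := e.symm u) (w := e.symm w) huw
      simpa using this
    · intro a b x y hab hbx hxy hax hby hay
      have := h2 (e.symm a) (e.symm b) (e.symm x) (e.symm y) hab hbx hxy
        (e.symm.injective.ne hax) (e.symm.injective.ne hby) (e.symm.injective.ne hay)
      simpa using this

lemma push_colorsUsed (c : β → ℕ) : colorsUsed (c ∘ e) = colorsUsed c := by
  ext n
  simp only [colorsUsed, Finset.mem_image, Finset.mem_univ, true_and, Function.comp_apply]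
  constructor
  · rintro ⟨u, rfl⟩; exact ⟨e u, rfl⟩
  · rintro ⟨v, rfl⟩; exact ⟨e.symm v, by simp⟩

lemma push_step (c' c : β → ℕ) :
    StarRecolorStep (pushGraph e G) c' c ↔ StarRecolorStep G (c' ∘ e) (c ∘ e) := by
  constructor
  · rintro ⟨hs, hs', i, hi, h1, h2⟩
    refine ⟨(push_isStar e G c).mp hs, (push_isStar e G c').mp hs', i,
      by rwa [push_colorsUsed], ?_, ?_⟩
    · intro u hu; exact h1 (e u) hu
    · intro u hu
      rcases h2 (e u) hu with ⟨ha, hb⟩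
      exact ⟨ha, by rwa [push_colorsUsed]⟩
  · rintro ⟨hs, hs', i, hi, h1, h2⟩
    refine ⟨(push_isStar e G c).mpr hs, (push_isStar e G c').mpr hs', i,
      by rwa [push_colorsUsed] at hi, ?_, ?_⟩
    · intro v hv
      have := h1 (e.symm v) (by simpa using hv)
      simpa using this
    · intro v hv
      have := h2 (e.symm v) (by simpa using hv)
      simpa [push_colorsUsed] using this

lemma push_starB (c : β → ℕ) :
    IsStarBColoring (pushGraph e G) c ↔ IsStarBColoring G (c ∘ e) := by
  constructor
  · rintro ⟨hs, hn⟩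
    refine ⟨(push_isStar e G c).mp hs, ?_⟩
    intro d hd
    apply hn (d ∘ e.symm)
    rw [push_step]
    have hde : (d ∘ e.symm) ∘ e = d := by ext u; simp
    rwa [hde]
  · rintro ⟨hs, hn⟩
    refine ⟨(push_isStar e G c).mpr hs, ?_⟩
    intro c' hc'
    exact hn (c' ∘ e) ((push_step e G c' c).mp hc')

lemma push_Sb : starBChromaticNumber (pushGraph e G) = starBChromaticNumber G := by
  unfold starBChromaticNumber
  congr 1
  ext n
  constructor
  · rintro ⟨c, hc, rfl⟩
    exact ⟨c ∘ e, (push_starB e G c).mp hc, by rw [push_colorsUsed]⟩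
  · rintro ⟨d, hd, rfl⟩
    refine ⟨d ∘ e.symm, ?_, ?_⟩
    · rw [push_starB]
      have hde : (d ∘ e.symm) ∘ e = d := by ext u; simp
      rwa [hde]
    · have hde : (d ∘ e.symm) ∘ e = d := by ext u; simp
      rw [← push_colorsUsed e, hde]

lemma push_update (c : β → ℕ) (v : β) (j : ℕ) :
    (Function.update c v j) ∘ e = Function.update (c ∘ e) (e.symm v) j := by
  ext u
  by_cases h : u = e.symm v
  · subst h
    rw [Function.comp_apply, Equiv.apply_symm_apply, Function.update_self,
      Function.update_self]
  · rw [Function.comp_apply, Function.update_of_ne h,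
      Function.update_of_ne (fun hh => h (by rw [← hh]; simp)), Function.comp_apply]

lemma push_blocked (c : β → ℕ) (v : β) (j : ℕ) :
    ColorBlockedFor (pushGraph e G) c v j ↔ ColorBlockedFor G (c ∘ e) (e.symm v) j := by
  unfold ColorBlockedFor
  have h1 : c v = (c ∘ e) (e.symm v) := by simp
  rw [← h1, push_isStar e G (Function.update c v j), push_update]

lemma push_starDegree (v : β) :
    starDegree (pushGraph e G) v = starDegree G (e.symm v) := by
  unfold starDegree
  congr 1
  ext n
  constructor
  · rintro ⟨c, hc, rfl⟩
    refine ⟨c ∘ e, (push_isStar e G c).mp hc, ?_⟩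
    congr 1
    ext j
    rw [Set.mem_setOf_eq, Set.mem_setOf_eq, push_colorsUsed, push_blocked]
  · rintro ⟨d, hd, rfl⟩
    have hde : (d ∘ e.symm) ∘ e = d := by ext u; simp
    refine ⟨d ∘ e.symm, ?_, ?_⟩
    · rw [push_isStar, hde]; exact hd
    · have := push_colorsUsed e (c := d ∘ e.symm)
      rw [hde] at this
      have hb : ∀ j, ColorBlockedFor (pushGraph e G) (d ∘ e.symm) v j ↔
          ColorBlockedFor G d (e.symm v) j := by
        intro j
        rw [push_blocked, hde]
      congr 1
      ext j
      rw [Set.mem_setOf_eq, Set.mem_setOf_eq, this, hb]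

lemma push_ms : msDegree (pushGraph e G) = msDegree G := by
  unfold msDegree
  congr 1
  ext n
  constructor
  · rintro ⟨s, rfl, hs⟩
    refine ⟨s.image e.symm, ?_, ?_⟩
    · rw [Finset.card_image_of_injective _ e.symm.injective]
    · intro u hu
      rw [Finset.mem_image] at hu
      obtain ⟨v, hv, rfl⟩ := hu
      rw [← push_starDegree e G v]
      exact hs v hv
  · rintro ⟨s, rfl, hs⟩
    refine ⟨s.image e, ?_, ?_⟩
    · rw [Finset.card_image_of_injective _ e.injective]
    · intro v hv
      rw [Finset.mem_image] at hv
      obtain ⟨u, hu, rfl⟩ := hv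
      rw [push_starDegree]
      simpa using hs u hu

lemma push_isTree (h : G.IsTree) : (pushGraph e G).IsTree := by
  have iso : G ≃g pushGraph e G := ⟨e, by intro a b; simp⟩
  constructor
  · exact iso.connected_iff.mp h.1
  · intro v p hp
    have hinj : Function.Injective iso.symm.toHom := iso.symm.injective
    exact h.2 (p.map iso.symm.toHom)
      ((SimpleGraph.Walk.map_isCycle_iff_of_injective hinj).mpr hp)

end Transfer

end Bushy


/-- **Theorem.** The difference `mₛ(T) − Sᵦ(T)` is unbounded on the class of trees:
for every natural number `M` there is a finite tree `T` with `mₛ(T) − Sᵦ(T) > M`. -/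
theorem msDegree_sub_starB_unbounded_on_trees (M : ℕ) :
    ∃ (m : ℕ) (T : SimpleGraph (Fin m)), T.IsTree ∧
      starBChromaticNumber T + M < msDegree T := by
  classical
  set k := M + 3 with hkdef
  set r := 2 * M + 3 with hrdef
  have hk : 2 ≤ k := by omega
  have hr : r + 3 = 2 * k := by omega
  let e := Fintype.equivFin (Bushy.VT k r)
  refine ⟨Fintype.card (Bushy.VT k r), Bushy.pushGraph e (Bushy.bush k r), ?_, ?_⟩
  · exact Bushy.push_isTree e _ (Bushy.bush_isTree hk)
  · rw [Bushy.push_Sb, Bushy.push_ms]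
    have h1 := Bushy.bush_starB_le (r := r) hk
    have h2 := Bushy.msDegree_ge hk hr
    omega
end
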